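/- arXiv:2602.03251 — 4 statements merged into one kernel-verified Lean document; each statement's English description precedes it below -/
import Mathlib

section
/- Let K be a field of characteristic 0 and let L be a quadratic extension of K generated by an element s with s ∉ K and r := s² ∈ K. If both s² − 2s + 4 and s² + 2s + 4 are squares in L, then r² + 4r + 16 is a square in K. -/
theorem square_norm_condition_in_quadratic_ext
    (K L : Type*) [Field K] [CharZero K] [Field L] [Algebra K L]
    (hquad : Module.finrank K L = 2)
    (s : L) (hs : s ∉ Set.range (algebraMap K L))
    (hgen : IntermediateField.adjoin K ({s} : Set L) = ⊤)
    (r : K) (hr : algebraMap K L r = s ^ 2)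
    (h1 : ∃ u : L, u ^ 2 = s ^ 2 - 2 * s + 4)
    (h2 : ∃ v : L, v ^ 2 = s ^ 2 + 2 * s + 4) :
    ∃ c : K, c ^ 2 = r ^ 2 + 4 * r + 16 := by
  obtain ⟨u, hu⟩ := h1
  have inj : Function.Injective (algebraMap K L) := (algebraMap K L).injective
  have key : ∀ x y : K, algebraMap K L x + algebraMap K L y * s = 0 → x = 0 ∧ y = 0 := by
    intro x y h
    by_cases hy : y = 0
    · subst hy
      simp at h
      exact ⟨h, rfl⟩
    · exfalso
      apply hs
      refine ⟨-(x/y), ?_⟩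
      have hyL : algebraMap K L y ≠ 0 := fun h' => hy (inj (by simpa using h'))
      rw [map_neg, map_div₀]
      field_simp
      linear_combination -h
  have hli : LinearIndependent K ![(1:L), s] := by
    rw [LinearIndependent.pair_iff]
    intro α β hab
    refine key α β ?_
    simpa [Algebra.smul_def] using hab
  have hcard : Fintype.card (Fin 2) = Module.finrank K L := by simp [hquad]
  let B : Module.Basis (Fin 2) K L := basisOfLinearIndependentOfCardEqFinrank hli hcard
  set a := B.repr u 0 with ha
  set b := B.repr u 1 with hb
  have hu' : u = algebraMap K L a + algebraMap K L b * s := by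
    have := B.sum_repr u
    rw [Fin.sum_univ_two] at this
    have hB0 : B 0 = 1 := by
      simp [B, coe_basisOfLinearIndependentOfCardEqFinrank]
    have hB1 : B 1 = s := by
      simp [B, coe_basisOfLinearIndependentOfCardEqFinrank]
    rw [hB0, hB1, Algebra.smul_def, Algebra.smul_def, mul_one] at this
    exact this.symm
  have e : algebraMap K L (a^2 + b^2*r - (r+4)) + algebraMap K L (2*a*b + 2) * s = 0 := by
    have h4 : algebraMap K L (4:K) = (4:L) := map_ofNat _ 4
    have h2' : algebraMap K L (2:K) = (2:L) := map_ofNat _ 2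
    simp only [map_sub, map_add, map_mul, map_pow, h4, h2', map_ofNat]
    linear_combination hu - (u + algebraMap K L a + algebraMap K L b * s) * hu' + ((algebraMap K L b)^2 - 1) * hr
  obtain ⟨e1, e2⟩ := key _ _ e
  refine ⟨a^2 - b^2*r, ?_⟩
  linear_combination (a^2 + b^2*r + r + 4) * e1 - (2*r*(a*b-1)) * e2
end

section
/- Let P = (x₀, y₀) be an affine point of the elliptic curve E₁ : y² = x³ − x² + x with coordinates in an algebraic closure ℚ̄ of ℚ, and suppose that P has finite order equal to a power of 2 in the group E₁(ℚ̄). Then the degree [ℚ(x₀, y₀) : ℚ] is a power of 2. -/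
set_option synthInstance.maxHeartbeats 400000
set_option maxHeartbeats 1000000

noncomputable section

open IntermediateField Polynomial Module WeierstrassCurve.Affine

local notation "Ω" => AlgebraicClosure ℚ

/-- Adjoining a root of a monic quadratic multiplies the degree by at most 2 (divisibility form). -/
lemma quad_step (F : IntermediateField ℚ Ω) [FiniteDimensional ℚ F] (a c b : Ω)
    (hc : c ∈ F) (hb : b ∈ F) (h : a ^ 2 + c * a + b = 0) :
    ∃ E : IntermediateField ℚ Ω, F ≤ E ∧ a ∈ E ∧ FiniteDimensional ℚ E ∧
      Module.finrank ℚ E ∣ 2 * Module.finrank ℚ F := by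
  set p : Polynomial ↥F := Polynomial.X ^ 2 + (Polynomial.C (⟨c, hc⟩ : F) * Polynomial.X + Polynomial.C (⟨b, hb⟩ : F)) with hp
  have hmonic : p.Monic := by
    rw [hp]
    apply monic_X_pow_add
    exact lt_of_le_of_lt degree_linear_le (by norm_num)
  have hdeg : p.natDegree ≤ 2 := by
    refine le_trans (natDegree_add_le _ _) ?_
    simp only [natDegree_X_pow, max_le_iff, le_refl, true_and]
    exact le_trans (natDegree_linear_le) (by norm_num)
  have hroot : Polynomial.aeval a p = 0 := by
    rw [hp]
    simp only [map_add, map_mul, map_pow, aeval_X, aeval_C, IntermediateField.algebraMap_apply]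
    rw [← add_assoc]
    exact h
  have hint : IsIntegral F a := ⟨p, hmonic, by rwa [← aeval_def]⟩
  have hdvd := minpoly.dvd F a hroot
  have h1 : (minpoly F a).natDegree ≤ 2 := le_trans (natDegree_le_of_dvd hdvd hmonic.ne_zero) hdeg
  have h0 : 0 < (minpoly F a).natDegree := minpoly.natDegree_pos hint
  have hd2 : (minpoly F a).natDegree ∣ 2 := by
    interval_cases h : (minpoly F a).natDegree <;> norm_num
  haveI : FiniteDimensional F F⟮a⟯ := adjoin.finiteDimensional hint
  refine ⟨F⟮a⟯.restrictScalars ℚ, fun x hx => F⟮a⟯.algebraMap_mem ⟨x, hx⟩, ?_, ?_, ?_⟩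
  · exact mem_adjoin_simple_self F a
  · exact FiniteDimensional.trans ℚ F F⟮a⟯
  · have hle : F ≤ F⟮a⟯.restrictScalars ℚ := fun x hx => F⟮a⟯.algebraMap_mem ⟨x, hx⟩
    have key := IntermediateField.finrank_bot_mul_relfinrank hle
    have h2 : IntermediateField.relfinrank F (F⟮a⟯.restrictScalars ℚ) = (minpoly F a).natDegree := by
      rw [IntermediateField.relfinrank_eq_finrank_of_le hle]
      exact adjoin.finrank hint
    rw [← key, h2, mul_comm 2]
    exact mul_dvd_mul_left _ hd2

/-- The elliptic curve `E₁ : y² = x³ - x² + x` over `ℚ`. -/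
def E₁ : WeierstrassCurve ℚ := ⟨0, -1, 0, 1, 0⟩

local notation "W" => WeierstrassCurve.toAffine (WeierstrassCurve.baseChange E₁ Ω)

lemma Wa₁ : (W).a₁ = 0 := by simp [E₁]
lemma Wa₂ : (W).a₂ = -1 := by simp [E₁]
lemma Wa₃ : (W).a₃ = 0 := by simp [E₁]
lemma Wa₄ : (W).a₄ = 1 := by simp [E₁]
lemma Wa₆ : (W).a₆ = 0 := by simp [E₁]

lemma WnegY (x y : Ω) : (W).negY x y = -y := by
  simp [WeierstrassCurve.Affine.negY, E₁]

lemma Weq {x y : Ω} (h : (W).Equation x y) : y ^ 2 = x ^ 3 - x ^ 2 + x := by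
  rw [WeierstrassCurve.Affine.equation_iff] at h
  rw [Wa₁, Wa₂, Wa₃, Wa₄, Wa₆] at h
  linear_combination h

open Classical in
open WeierstrassCurve.Affine.Point in
lemma aux (k : ℕ) : ∀ (x₀ y₀ : Ω) (hP : (W).Nonsingular x₀ y₀),
    (2 ^ k) • (WeierstrassCurve.Affine.Point.some _ _ hP) = 0 →
    ∃ E : IntermediateField ℚ Ω, x₀ ∈ E ∧ y₀ ∈ E ∧ FiniteDimensional ℚ E ∧
      ∃ N : ℕ, Module.finrank ℚ E ∣ 2 ^ N := by
  induction k with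
  | zero =>
    intro x₀ y₀ hP h
    rw [pow_zero, one_smul] at h
    exact absurd h (some_ne_zero hP)
  | succ k ih =>
    intro x₀ y₀ hP h
    have heq : y₀ ^ 2 = x₀ ^ 3 - x₀ ^ 2 + x₀ := Weq hP.1
    by_cases hy : y₀ = (W).negY x₀ y₀
    · -- then y₀ = 0 and x₀(x₀² - x₀ + 1) = 0
      rw [WnegY] at hy
      have hy0 : y₀ = 0 := by linear_combination hy / 2
      have hx : x₀ * (x₀ ^ 2 - x₀ + 1) = 0 := by
        rw [hy0] at heq
        linear_combination -heq
      rcases mul_eq_zero.mp hx with h0 | h0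
      · exact ⟨⊥, h0 ▸ zero_mem ⊥, hy0 ▸ zero_mem ⊥, inferInstance, 0,
          by simp [IntermediateField.finrank_bot]⟩
      · obtain ⟨E, -, hxE, hfd, hdvd⟩ := quad_step ⊥ x₀ (-1) 1
          (neg_mem (one_mem ⊥)) (one_mem ⊥) (by linear_combination h0)
        refine ⟨E, hxE, hy0 ▸ zero_mem E, hfd, 1, ?_⟩
        rw [IntermediateField.finrank_bot, mul_one] at hdvd
        simpa using hdvd
    · -- doubling case
      have hy0 : y₀ ≠ 0 := fun h0 => hy (by rw [WnegY, h0, _root_.neg_zero])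
      have hx0 : x₀ ≠ 0 := by
        intro h0
        apply hy0
        have : y₀ ^ 2 = 0 := by rw [heq, h0]; ring
        exact pow_eq_zero_iff (n := 2) (by norm_num) |>.mp this
      set L := (W).slope x₀ x₀ y₀ y₀ with hLdef
      have hL : 2 * y₀ * L = 3 * x₀ ^ 2 - 2 * x₀ + 1 := by
        rw [hLdef, WeierstrassCurve.Affine.slope_of_Y_ne rfl hy, WnegY, Wa₁, Wa₂, Wa₄]
        rw [show y₀ - -y₀ = 2 * y₀ by ring]
        field_simp
        ring
      have hQ : WeierstrassCurve.Affine.Point.some _ _ hP + WeierstrassCurve.Affine.Point.some _ _ hP =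
          WeierstrassCurve.Affine.Point.some _ _
            (WeierstrassCurve.Affine.nonsingular_add hP hP fun hxy => hy hxy.2) :=
        WeierstrassCurve.Affine.Point.add_self_of_Y_ne hy
      have hord' : (2 ^ k) •
          (WeierstrassCurve.Affine.Point.some _ _
            (WeierstrassCurve.Affine.nonsingular_add hP hP fun hxy => hy hxy.2)) = 0 := by
        rw [← hQ, ← two_smul ℕ, ← mul_smul, ← pow_succ]
        exact h
      obtain ⟨E, hx₁E, hy₁E, hfdE, N, hdvd⟩ := ih _ _ _ hord'
      -- x₁ = L² + 1 - 2x₀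
      set x₁ := (W).addX x₀ x₀ L with hx₁def
      have hx₁ : x₁ = L ^ 2 + 1 - 2 * x₀ := by
        rw [hx₁def, WeierstrassCurve.Affine.addX, Wa₁, Wa₂]; ring
      -- key identity for s = x₀ + x₀⁻¹
      set s : Ω := x₀ + x₀⁻¹ with hsdef
      have hL2 : 4 * y₀ ^ 2 * L ^ 2 = (3 * x₀ ^ 2 - 2 * x₀ + 1) ^ 2 := by
        linear_combination (2 * y₀ * L + 3 * x₀ ^ 2 - 2 * x₀ + 1) * hL
      have hx₁y : 4 * y₀ ^ 2 * x₁ = (x₀ ^ 2 - 1) ^ 2 := by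
        rw [hx₁]
        linear_combination hL2 + (4 - 8 * x₀) * heq
      have hxs : x₀ * s = x₀ ^ 2 + 1 := by
        rw [hsdef]
        field_simp
      have hsx : x₀ ^ 2 * (s ^ 2 + (-(4 * x₁)) * s + (4 * x₁ - 4)) = 0 := by
        linear_combination (x₀ * s + x₀ ^ 2 + 1 - 4 * x₁ * x₀) * hxs - hx₁y + 4 * x₁ * heq
      have hs : s ^ 2 + (-(4 * x₁)) * s + (4 * x₁ - 4) = 0 :=
        (mul_eq_zero.mp hsx).resolve_left (pow_ne_zero 2 hx0)
      have h4 : (4 : Ω) ∈ E := by simpa using SubfieldClass.ratCast_mem E (4 : ℚ)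
      obtain ⟨E1, hE1le, hsE1, hfd1, hdvd1⟩ := quad_step E s (-(4 * x₁)) (4 * x₁ - 4)
        (neg_mem (mul_mem h4 hx₁E)) (sub_mem (mul_mem h4 hx₁E) h4) hs
      obtain ⟨E2, hE2le, hxE2, hfd2, hdvd2⟩ := quad_step E1 x₀ (-s) 1
        (neg_mem hsE1) (one_mem E1) (by linear_combination -hxs)
      obtain ⟨E3, hE3le, hyE3, hfd3, hdvd3⟩ := quad_step E2 y₀ 0
        (-(x₀ ^ 3 - x₀ ^ 2 + x₀)) (zero_mem E2)
        (neg_mem (add_mem (sub_mem (pow_mem hxE2 3) (pow_mem hxE2 2)) hxE2))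
        (by linear_combination heq)
      have d1 : Module.finrank ℚ E1 ∣ 2 ^ (N + 1) := by
        rw [pow_succ']; exact hdvd1.trans (mul_dvd_mul_left 2 hdvd)
      have d2 : Module.finrank ℚ E2 ∣ 2 ^ (N + 2) := by
        rw [pow_succ']; exact hdvd2.trans (mul_dvd_mul_left 2 d1)
      have d3 : Module.finrank ℚ E3 ∣ 2 ^ (N + 3) := by
        rw [pow_succ']; exact hdvd3.trans (mul_dvd_mul_left 2 d2)
      exact ⟨E3, hE3le hxE2, hyE3, hfd3, N + 3, d3⟩


open Classical in
theorem two_power_torsion_of_E1_has_two_power_degree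
    (x₀ y₀ : AlgebraicClosure ℚ)
    (hP : ((E₁.baseChange (AlgebraicClosure ℚ)).toAffine).Nonsingular x₀ y₀)
    (hord : ∃ k : ℕ, addOrderOf (WeierstrassCurve.Affine.Point.some _ _ hP) = 2 ^ k) :
    ∃ m : ℕ, Module.finrank ℚ
      (IntermediateField.adjoin ℚ ({x₀, y₀} : Set (AlgebraicClosure ℚ)) :
        IntermediateField ℚ (AlgebraicClosure ℚ)) = 2 ^ m := by
  obtain ⟨k, hk⟩ := hord
  have hsm : (2 ^ k) • (WeierstrassCurve.Affine.Point.some _ _ hP) = 0 := by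
    rw [← hk]; exact addOrderOf_nsmul_eq_zero _
  obtain ⟨E, hxE, hyE, hfdE, N, hdvd⟩ := aux k x₀ y₀ hP hsm
  have hAle : IntermediateField.adjoin ℚ ({x₀, y₀} : Set (AlgebraicClosure ℚ)) ≤ E :=
    IntermediateField.adjoin_le_iff.mpr
      (Set.insert_subset_iff.mpr ⟨hxE, Set.singleton_subset_iff.mpr hyE⟩)
  have hdvd' : Module.finrank ℚ
      (IntermediateField.adjoin ℚ ({x₀, y₀} : Set (AlgebraicClosure ℚ))) ∣ 2 ^ N :=
    dvd_trans ⟨_, (IntermediateField.finrank_bot_mul_relfinrank hAle).symm⟩ hdvd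
  obtain ⟨m, -, hm⟩ := (Nat.dvd_prime_pow Nat.prime_two).mp hdvd'
  exact ⟨m, hm⟩
end
end

section
/- The elliptic curve E₁ : y² = x³ − x² + x has exactly four rational points: the point at infinity and the affine points (0,0), (1,1), (1,−1). In particular, E₁(ℚ) is finite (Mordell–Weil rank 0) and is cyclic of order 4. -/
noncomputable section

namespace E1aux

/-! ### Elementary coprimality helpers -/

lemma isCoprime_two_of_odd {n : ℤ} (h : Odd n) : IsCoprime (2 : ℤ) n := by
  obtain ⟨k, rfl⟩ := h
  exact ⟨-k, 1, by ring⟩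

lemma isCoprime_four_of_odd {n : ℤ} (h : Odd n) : IsCoprime (4 : ℤ) n := by
  have h2 := isCoprime_two_of_odd h
  have h4 : (4 : ℤ) = 2 * 2 := by norm_num
  rw [h4]
  exact h2.mul_left h2


lemma odd3 : Odd (3 : ℤ) := ⟨1, by norm_num⟩

lemma even_sq_of_even {a : ℤ} (h : Even a) : Even (a ^ 2) := by
  obtain ⟨r, rfl⟩ := h
  exact ⟨2 * r ^ 2, by ring⟩

lemma even_pow4_of_even {a : ℤ} (h : Even a) : Even (a ^ 4) := by
  obtain ⟨r, rfl⟩ := h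
  exact ⟨8 * r ^ 4, by ring⟩

lemma odd_of_odd_sq {a : ℤ} (h : Odd (a ^ 2)) : Odd a := by
  rcases Int.even_or_odd a with he | ho
  · exact absurd h (Int.not_odd_iff_even.mpr (even_sq_of_even he))
  · exact ho

lemma odd_of_odd_pow4 {a : ℤ} (h : Odd (a ^ 4)) : Odd a := by
  rcases Int.even_or_odd a with he | ho
  · exact absurd h (Int.not_odd_iff_even.mpr (even_pow4_of_even he))
  · exact ho

lemma isCoprime_of_add_mul {a b : ℤ} (h : IsCoprime (a + b) (a * b)) : IsCoprime a b := by
  obtain ⟨x, y, hxy⟩ := h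
  exact ⟨x, x + y * a, by linear_combination hxy⟩

lemma isCoprime_three {a : ℤ} (h : ¬ (3 : ℤ) ∣ a) : IsCoprime (3 : ℤ) a := by
  rw [Int.isCoprime_iff_gcd_eq_one]
  have h3 : ¬ (3 : ℕ) ∣ a.natAbs := by
    intro hd
    apply h
    have h' : ((3 : ℤ).natAbs) ∣ a.natAbs := by simpa using hd
    exact Int.natAbs_dvd_natAbs.mp h'
  have := (Nat.Prime.coprime_iff_not_dvd (by norm_num : Nat.Prime 3)).mpr h3
  simpa [Int.gcd] using this

lemma helper_cop {a b c d α β γ δ : ℤ} (hcd : IsCoprime c d) (hb : Odd b)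
    (h1 : α * a + β * b = 4 * c ^ 2) (h2 : γ * a + δ * b = 4 * d ^ 2) : IsCoprime a b := by
  obtain ⟨x, y, hxy⟩ := hcd.pow (m := 2) (n := 2)
  obtain ⟨s, t, hst⟩ := isCoprime_four_of_odd hb
  exact ⟨s * (x * α + y * γ), s * (x * β + y * δ) + t, by
    linear_combination s * x * h1 + s * y * h2 + 4 * s * hxy + hst⟩

lemma eq_of_sq_eq_sq {a b : ℤ} (ha : 0 ≤ a) (hb : 0 ≤ b) (h : a ^ 2 = b ^ 2) : a = b := by
  have h4 : (a - b) * (a + b) = 0 := by linear_combination h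
  rcases mul_eq_zero.mp h4 with h' | h'
  · linarith
  · have : a = 0 ∧ b = 0 := by constructor <;> linarith
    simp [this.1, this.2]

lemma pow4_split {a b q : ℤ} (h : IsCoprime a b) (ha : 0 < a) (hb : 0 < b)
    (heq : a * b = q ^ 4) : ∃ c d : ℤ, a = c ^ 4 ∧ b = d ^ 4 := by
  have h2 : a * b = (q ^ 2) ^ 2 := by linear_combination heq
  obtain ⟨a0, ha0⟩ := Int.sq_of_isCoprime h h2
  obtain ⟨b0, hb0⟩ := Int.sq_of_isCoprime (c := q ^ 2) h.symm (by linear_combination h2)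
  have ha' : a = |a0| ^ 2 := by
    rcases ha0 with h' | h'
    · rw [sq_abs]; exact h'
    · nlinarith [sq_nonneg a0]
  have hb' : b = |b0| ^ 2 := by
    rcases hb0 with h' | h'
    · rw [sq_abs]; exact h'
    · nlinarith [sq_nonneg b0]
  have hcop : IsCoprime |a0| |b0| := by
    have h3 : IsCoprime (|a0| ^ 2) (|b0| ^ 2) := by rw [← ha', ← hb']; exact h
    exact (h3.of_isCoprime_of_dvd_left (dvd_pow_self _ two_ne_zero)).of_isCoprime_of_dvd_right
      (dvd_pow_self _ two_ne_zero)
  have hprod : |a0| * |b0| = q ^ 2 := by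
    apply eq_of_sq_eq_sq (mul_nonneg (abs_nonneg _) (abs_nonneg _)) (sq_nonneg q)
    rw [mul_pow, ← ha', ← hb']
    linear_combination h2
  obtain ⟨c, hc⟩ := Int.sq_of_isCoprime hcop (by rw [hprod])
  obtain ⟨d, hd⟩ := Int.sq_of_isCoprime hcop.symm (by rw [mul_comm, hprod])
  have hc' : |a0| = c ^ 2 := by
    rcases hc with h' | h'
    · exact h'
    · nlinarith [abs_nonneg a0, sq_nonneg c, sq_nonneg a0]
  have hd' : |b0| = d ^ 2 := by
    rcases hd with h' | h'
    · exact h'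
    · nlinarith [abs_nonneg b0, sq_nonneg d, sq_nonneg b0]
  exact ⟨c, d, by rw [ha', hc']; ring, by rw [hb', hd']; ring⟩

lemma even_of_two_dvd {n : ℤ} (h : Even n) : (2 : ℤ) ∣ n := by
  obtain ⟨r, rfl⟩ := h; exact ⟨r, by ring⟩

lemma not_both_even {a b : ℤ} (h : IsCoprime a b) (ha : Even a) (hb : Even b) : False := by
  have := h.isUnit_of_dvd' (even_of_two_dvd ha) (even_of_two_dvd hb)
  rw [Int.isUnit_iff] at this
  omega

/-! ### Splitting coprime factorizations of `3w⁴` and `12q⁴` -/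

lemma split3_aux {g1 g2 w : ℤ} (hco : IsCoprime g1 g2) (hg1 : Even g1) (hg2 : Odd g2)
    (g1pos : 0 < g1) (g2pos : 0 < g2) (heq : g1 * g2 = 3 * w ^ 4) :
    ∃ c d : ℤ, IsCoprime c d ∧ Odd d ∧ Even c ∧ w ^ 2 = c ^ 2 * d ^ 2 ∧
      ((g1 = c ^ 4 ∧ g2 = 3 * d ^ 4) ∨ (g1 = 3 * c ^ 4 ∧ g2 = d ^ 4)) := by
  have h3 : (3 : ℤ) ∣ g1 * g2 := ⟨w ^ 4, heq⟩
  have hp3 : Prime (3 : ℤ) := Int.prime_three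
  rcases (hp3.dvd_mul).mp h3 with h3' | h3'
  · -- 3 ∣ g1
    obtain ⟨k, hk⟩ := h3'
    have hk2 : k * g2 = w ^ 4 := by nlinarith [heq, hk]
    have hkpos : 0 < k := by nlinarith
    have hkco : IsCoprime k g2 := hco.of_isCoprime_of_dvd_left ⟨3, by linarith [hk]⟩
    obtain ⟨c, d, hc, hd⟩ := pow4_split hkco hkpos g2pos hk2
    have hw2 : w ^ 2 = c ^ 2 * d ^ 2 := by
      apply eq_of_sq_eq_sq (sq_nonneg w) (by positivity)
      linear_combination (-1) * hk2 + g2 * hc + c ^ 4 * hd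
    have hdodd : Odd d := odd_of_odd_pow4 (by rw [← hd]; exact hg2)
    have hceven : Even c := by
      rcases Int.even_or_odd c with h | h
      · exact h
      · exfalso
        have hodd1 : Odd (3 * c ^ 4) := odd3.mul h.pow
        have heq' : Even (3 * c ^ 4) := by
          have := hg1
          rw [hk, hc] at this
          exact this
        exact (Int.not_odd_iff_even.mpr heq') hodd1
    have hcd : IsCoprime c d := by
      have := hkco
      rw [hc, hd] at this
      exact (this.of_isCoprime_of_dvd_left (dvd_pow_self _ (by norm_num))).of_isCoprime_of_dvd_right
        (dvd_pow_self _ (by norm_num))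
    exact ⟨c, d, hcd, hdodd, hceven, hw2, Or.inr ⟨by rw [hk, hc], hd⟩⟩
  · -- 3 ∣ g2
    obtain ⟨n, hn⟩ := h3'
    have hn2 : g1 * n = w ^ 4 := by nlinarith [heq, hn]
    have hnpos : 0 < n := by nlinarith
    have hnco : IsCoprime g1 n := hco.of_isCoprime_of_dvd_right ⟨3, by linarith [hn]⟩
    obtain ⟨c, d, hc, hd⟩ := pow4_split hnco g1pos hnpos hn2
    have hw2 : w ^ 2 = c ^ 2 * d ^ 2 := by
      apply eq_of_sq_eq_sq (sq_nonneg w) (by positivity)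
      linear_combination (-1) * hn2 + n * hc + c ^ 4 * hd
    have hdodd : Odd d := by
      rcases Int.even_or_odd d with he | ho
      · exfalso
        have : Even g2 := by rw [hn, hd]; exact (even_pow4_of_even he).mul_left 3
        exact (Int.not_odd_iff_even.mpr this) hg2
      · exact ho
    have hceven : Even c := by
      have hg1' : Even (c ^ 4) := by rwa [hc] at hg1
      rcases Int.even_or_odd c with h | h
      · exact h
      · exact absurd (h.pow : Odd (c ^ 4)) (Int.not_odd_iff_even.mpr hg1')
    have hcd : IsCoprime c d := by
      have := hnco
      rw [hc, hd] at this
      exact (this.of_isCoprime_of_dvd_left (dvd_pow_self _ (by norm_num))).of_isCoprime_of_dvd_right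
        (dvd_pow_self _ (by norm_num))
    exact ⟨c, d, hcd, hdodd, hceven, hw2, Or.inl ⟨hc, by rw [hn, hd]⟩⟩

lemma split3 {g1 g2 w : ℤ} (hco : IsCoprime g1 g2) (hsum : Odd (g1 + g2))
    (g1pos : 0 < g1) (g2pos : 0 < g2) (heq : g1 * g2 = 3 * w ^ 4) :
    ∃ c d : ℤ, IsCoprime c d ∧ Odd d ∧ Even c ∧ w ^ 2 = c ^ 2 * d ^ 2 ∧
      ((g1 = c ^ 4 ∧ g2 = 3 * d ^ 4) ∨ (g1 = 3 * c ^ 4 ∧ g2 = d ^ 4) ∨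
       (g1 = 3 * d ^ 4 ∧ g2 = c ^ 4) ∨ (g1 = d ^ 4 ∧ g2 = 3 * c ^ 4)) := by
  rcases Int.even_or_odd g1 with h1 | h1
  · have h2 : Odd g2 := by
      rcases Int.even_or_odd g2 with h2 | h2
      · exact absurd (not_both_even hco h1 h2) (by simp)
      · exact h2
    obtain ⟨c, d, hcd, hdo, hce, hw, hpat⟩ := split3_aux hco h1 h2 g1pos g2pos heq
    exact ⟨c, d, hcd, hdo, hce, hw, by tauto⟩
  · have h2 : Even g2 := by
      rcases Int.even_or_odd g2 with h2 | h2
      · exact h2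
      · exfalso
        have : Even (g1 + g2) := h1.add_odd h2
        exact (Int.not_odd_iff_even.mpr this) hsum
    obtain ⟨c, d, hcd, hdo, hce, hw, hpat⟩ :=
      split3_aux hco.symm h2 h1 g2pos g1pos (by linarith [heq, mul_comm g1 g2])
    refine ⟨c, d, hcd, hdo, hce, hw, ?_⟩
    tauto

lemma split12 {h1 h2 q : ℤ} (hco : IsCoprime h1 h2) (hsum : Odd (h1 + h2))
    (h1pos : 0 < h1) (h2pos : 0 < h2) (heq : h1 * h2 = 12 * q ^ 4) :
    ∃ c d : ℤ, IsCoprime c d ∧ Odd d ∧ q ^ 2 = c ^ 2 * d ^ 2 ∧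
      (h1 + h2 = d ^ 4 + 12 * c ^ 4 ∨ h1 + h2 = 3 * d ^ 4 + 4 * c ^ 4) := by
  -- reduce to the even/odd ordered case
  suffices aux : ∀ a b : ℤ, IsCoprime a b → Even a → Odd b → 0 < a → 0 < b →
      a * b = 12 * q ^ 4 →
      ∃ c d : ℤ, IsCoprime c d ∧ Odd d ∧ q ^ 2 = c ^ 2 * d ^ 2 ∧
        (a + b = d ^ 4 + 12 * c ^ 4 ∨ a + b = 3 * d ^ 4 + 4 * c ^ 4) by
    rcases Int.even_or_odd h1 with h | h
    · have hodd2 : Odd h2 := by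
        rcases Int.even_or_odd h2 with h' | h'
        · exact absurd (not_both_even hco h h') (by simp)
        · exact h'
      exact aux h1 h2 hco h hodd2 h1pos h2pos heq
    · have heven2 : Even h2 := by
        rcases Int.even_or_odd h2 with h' | h'
        · exact h'
        · exact absurd (h.add_odd h') (by simpa using hsum)
      obtain ⟨c, d, hcd, hdo, hq, hpat⟩ :=
        aux h2 h1 hco.symm heven2 h h2pos h1pos (by linarith [heq, mul_comm h1 h2])
      exact ⟨c, d, hcd, hdo, hq, by rwa [add_comm h1 h2]⟩
  intro a b hab ha hb hapos hbpos heqab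
  -- 4 ∣ a
  have h4a : (4 : ℤ) ∣ a := by
    have h4 : (4 : ℤ) ∣ a * b := ⟨3 * q ^ 4, by linarith⟩
    exact (isCoprime_four_of_odd hb).dvd_of_dvd_mul_right h4
  obtain ⟨k, hk⟩ := h4a
  have hkb : k * b = 3 * q ^ 4 := by nlinarith [heqab, hk]
  have hkpos : 0 < k := by nlinarith
  have hkco : IsCoprime k b := hab.of_isCoprime_of_dvd_left ⟨4, by linarith [hk]⟩
  have h3 : (3 : ℤ) ∣ k * b := ⟨q ^ 4, hkb⟩
  rcases (Int.prime_three.dvd_mul).mp h3 with h3' | h3'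
  · -- 3 ∣ k : a = 12 c⁴, b = d⁴
    obtain ⟨m, hm⟩ := h3'
    have hm2 : m * b = q ^ 4 := by nlinarith [hkb, hm]
    have hmpos : 0 < m := by nlinarith
    have hmco : IsCoprime m b := hkco.of_isCoprime_of_dvd_left ⟨3, by linarith [hm]⟩
    obtain ⟨c, d, hc, hd⟩ := pow4_split hmco hmpos hbpos hm2
    have hq2 : q ^ 2 = c ^ 2 * d ^ 2 := by
      apply eq_of_sq_eq_sq (sq_nonneg q) (by positivity)
      linear_combination (-1) * hm2 + b * hc + c ^ 4 * hd
    have hdodd : Odd d := odd_of_odd_pow4 (by rw [← hd]; exact hb)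
    have hcd : IsCoprime c d := by
      have := hmco
      rw [hc, hd] at this
      exact (this.of_isCoprime_of_dvd_left (dvd_pow_self _ (by norm_num))).of_isCoprime_of_dvd_right
        (dvd_pow_self _ (by norm_num))
    exact ⟨c, d, hcd, hdodd, hq2, Or.inl (by rw [hk, hm, hc, hd]; ring)⟩
  · -- 3 ∣ b : a = 4 c⁴, b = 3 d⁴
    obtain ⟨n, hn⟩ := h3'
    have hn2 : k * n = q ^ 4 := by nlinarith [hkb, hn]
    have hnpos : 0 < n := by nlinarith
    have hnco : IsCoprime k n := hkco.of_isCoprime_of_dvd_right ⟨3, by linarith [hn]⟩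
    obtain ⟨c, d, hc, hd⟩ := pow4_split hnco hkpos hnpos hn2
    have hq2 : q ^ 2 = c ^ 2 * d ^ 2 := by
      apply eq_of_sq_eq_sq (sq_nonneg q) (by positivity)
      linear_combination (-1) * hn2 + n * hc + c ^ 4 * hd
    have hdodd : Odd d := by
      rcases Int.even_or_odd d with he | ho
      · exfalso
        have : Even b := by rw [hn, hd]; exact (even_pow4_of_even he).mul_left 3
        exact (Int.not_odd_iff_even.mpr this) hb
      · exact ho
    have hcd : IsCoprime c d := by
      have := hnco
      rw [hc, hd] at this
      exact (this.of_isCoprime_of_dvd_left (dvd_pow_self _ (by norm_num))).of_isCoprime_of_dvd_right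
        (dvd_pow_self _ (by norm_num))
    exact ⟨c, d, hcd, hdodd, hq2, Or.inr (by rw [hk, hc, hn, hd]; ring)⟩

/-! ### From a `(1,4)`-concordant pair to an instance of the quartic -/

lemma C_to_W {f c e d : ℤ} (hf : Odd f) (hcop : Int.gcd f c = 1)
    (h1 : f ^ 2 + c ^ 2 = e ^ 2) (h2 : f ^ 2 + 4 * c ^ 2 = d ^ 2) :
    ∃ A B : ℤ, IsCoprime A B ∧ ((Odd A ∧ Even B) ∨ (Even A ∧ Odd B)) ∧
      d ^ 2 = A ^ 4 + 14 * A ^ 2 * B ^ 2 + B ^ 4 ∧ c = 2 * A * B ∧ A ^ 2 + B ^ 2 ≤ |e| := by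
  have hpt : PythagoreanTriple f c e := by
    unfold PythagoreanTriple
    linear_combination h1
  obtain ⟨m, n, hmn1, hmn2, hmn3, hmn4⟩ := (PythagoreanTriple.coprime_classification.mp ⟨hpt, hcop⟩)
  have hfc : f = m ^ 2 - n ^ 2 ∧ c = 2 * m * n := by
    rcases hmn1 with h | h
    · exact h
    · exfalso
      obtain ⟨hfe, -⟩ := h
      rw [hfe] at hf
      exact (Int.not_odd_iff_even.mpr ⟨m * n, by ring⟩) hf
  obtain ⟨hfeq, hceq⟩ := hfc
  refine ⟨m, n, Int.isCoprime_iff_gcd_eq_one.mpr hmn3, ?_, ?_, by rw [hceq], ?_⟩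
  · rcases hmn4 with ⟨h1', h2'⟩ | ⟨h1', h2'⟩
    · exact Or.inr ⟨Int.even_iff.mpr h1', Int.odd_iff.mpr h2'⟩
    · exact Or.inl ⟨Int.odd_iff.mpr h1', Int.even_iff.mpr h2'⟩
  · rw [← h2, hfeq, hceq]; ring
  · rcases hmn2 with h | h
    · rw [h, abs_of_nonneg (by positivity)]
    · rw [h, abs_of_nonpos (neg_nonpos.mpr (by positivity)), neg_neg]

/-! ### The `3 ∤ t` facts via `ZMod 3` -/

lemma int_cast_eq_zmod (n : ℕ) {a b : ℤ} (h : a = b) : (a : ZMod n) = (b : ZMod n) := by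
  rw [h]

lemma three_not_dvd_W {p q t : ℤ} (hco : IsCoprime p q)
    (ht : t ^ 2 = p ^ 4 + 14 * p ^ 2 * q ^ 2 + q ^ 4) : ¬ (3 : ℤ) ∣ t := by
  intro h3
  have hcast := int_cast_eq_zmod 3 ht
  push_cast at hcast
  have ht3 : ((t : ZMod 3)) = 0 := (ZMod.intCast_zmod_eq_zero_iff_dvd t 3).mpr h3
  rw [ht3] at hcast
  have key : ∀ a b : ZMod 3, (0:ZMod 3) ^ 2 = a ^ 4 + 14 * a ^ 2 * b ^ 2 + b ^ 4 → a = 0 ∧ b = 0 := by decide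
  obtain ⟨hp3, hq3⟩ := key _ _ hcast
  rw [ZMod.intCast_zmod_eq_zero_iff_dvd] at hp3 hq3
  have := hco.isUnit_of_dvd' hp3 hq3
  rw [Int.isUnit_iff] at this
  omega

lemma three_not_dvd_M {u w t : ℤ} (hco : IsCoprime u w)
    (ht : t ^ 2 = u ^ 4 - 4 * u ^ 2 * w ^ 2 + 16 * w ^ 4) : ¬ (3 : ℤ) ∣ t := by
  intro h3
  have hcast := int_cast_eq_zmod 3 ht
  push_cast at hcast
  have ht3 : ((t : ZMod 3)) = 0 := (ZMod.intCast_zmod_eq_zero_iff_dvd t 3).mpr h3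
  rw [ht3] at hcast
  have key : ∀ a b : ZMod 3, (0:ZMod 3) ^ 2 = a ^ 4 - 4 * a ^ 2 * b ^ 2 + 16 * b ^ 4 → a = 0 ∧ b = 0 := by
    decide
  obtain ⟨hp3, hq3⟩ := key _ _ hcast
  rw [ZMod.intCast_zmod_eq_zero_iff_dvd] at hp3 hq3
  have := hco.isUnit_of_dvd' hp3 hq3
  rw [Int.isUnit_iff] at this
  omega

/-! ### The descent engine: `t² = p⁴ + 14p²q² + q⁴` has only trivial solutions -/

set_option maxHeartbeats 2000000 in
lemma lemW_aux (N : ℕ) : ∀ (p q t : ℤ), (p ^ 2 + 7 * q ^ 2).toNat < N → IsCoprime p q →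
    Odd p → Even q → t ^ 2 = p ^ 4 + 14 * p ^ 2 * q ^ 2 + q ^ 4 → q = 0 := by
  induction N with
  | zero =>
      intro p q t h
      exact absurd h (Nat.not_lt_zero _)
  | succ N IH =>
      intro p q t hN hco hp hq ht
      by_contra hq0
      -- replace t by |t|
      set t₁ : ℤ := |t| with ht₁def
      have ht₁ : t₁ ^ 2 = p ^ 4 + 14 * p ^ 2 * q ^ 2 + q ^ 4 := by rw [ht₁def, sq_abs]; exact ht
      have htodd : Odd t₁ := by
        have h2 : Odd (t₁ ^ 2) := by
          rw [ht₁]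
          obtain ⟨a, ha⟩ := hp
          obtain ⟨b, hb⟩ := hq
          exact ⟨8 * a ^ 4 + 16 * a ^ 3 + 12 * a ^ 2 + 4 * a + 112 * a ^ 2 * b ^ 2 +
            112 * a * b ^ 2 + 28 * b ^ 2 + 8 * b ^ 4, by rw [ha, hb]; ring⟩
        exact odd_of_odd_sq h2
      have hpne : p ≠ 0 := by
        rintro rfl
        exact (Int.not_odd_iff_even.mpr Even.zero) hp
      have hp1 : 1 ≤ p ^ 2 := by
        have := Int.one_le_abs (by simpa using hpne)
        nlinarith [sq_abs p]
      have ht₁pos : 0 < t₁ := by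
        rcases lt_or_eq_of_le (abs_nonneg t) with h | h
        · exact h
        · exfalso
          have h0 : t₁ = 0 := h.symm
          rw [h0] at ht₁
          nlinarith [sq_nonneg q, sq_nonneg (p * q), sq_nonneg (p ^ 2), hp1]
      -- halves
      have hModd : Odd (p ^ 2 + 7 * q ^ 2) := by
        obtain ⟨a, ha⟩ := hp
        obtain ⟨b, hb⟩ := hq
        exact ⟨2 * a ^ 2 + 2 * a + 14 * b ^ 2, by rw [ha, hb]; ring⟩
      have hev1 : Even (p ^ 2 + 7 * q ^ 2 - t₁) := hModd.sub_odd htodd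
      obtain ⟨h1, hh1⟩ := hev1
      have hh1' : p ^ 2 + 7 * q ^ 2 - t₁ = 2 * h1 := by linarith [hh1]
      have hh2' : p ^ 2 + 7 * q ^ 2 + t₁ = 2 * (h1 + t₁) := by linarith [hh1]
      set h2 : ℤ := h1 + t₁ with hh2def
      have hsum : h1 + h2 = p ^ 2 + 7 * q ^ 2 := by rw [hh2def]; linarith [hh1']
      have hprod : h1 * h2 = 12 * q ^ 4 := by
        have hfact : (p ^ 2 + 7 * q ^ 2 - t₁) * (p ^ 2 + 7 * q ^ 2 + t₁) = 48 * q ^ 4 := by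
          linear_combination (-1) * ht₁
        rw [hh1', hh2'] at hfact
        exact mul_left_cancel₀ (by norm_num : (4:ℤ) ≠ 0) (by linear_combination hfact)
      have hq4pos : (0 : ℤ) < 12 * q ^ 4 := by positivity
      have hsumpos : 0 < h1 + h2 := by
        rw [hsum]; positivity
      have h2pos : 0 < h2 := by
        by_contra hng
        push_neg at hng
        have hg1nn : 0 < h1 := by linarith
        nlinarith [hprod, hq4pos]
      have h1pos : 0 < h1 := by
        by_contra hng
        push_neg at hng
        nlinarith [hprod, hq4pos, h2pos]
      have hsumodd : Odd (h1 + h2) := by rw [hsum]; exact hModd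
      -- coprimality of the halves
      have hcop12 : IsCoprime h1 h2 := by
        apply isCoprime_of_add_mul
        rw [hsum, hprod]
        have hMq : IsCoprime (p ^ 2 + 7 * q ^ 2) q := by
          have h' : IsCoprime (p ^ 2) q := hco.pow_left
          have := h'.add_mul_right_left (7 * q)
          have heq' : p ^ 2 + 7 * q * q = p ^ 2 + 7 * q ^ 2 := by ring
          rwa [heq'] at this
        have hM2 : IsCoprime (p ^ 2 + 7 * q ^ 2) 2 := (isCoprime_two_of_odd hModd).symm
        have hM3 : IsCoprime (p ^ 2 + 7 * q ^ 2) 3 := by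
          refine (isCoprime_three ?_).symm
          intro h3
          have hM0 : ((p ^ 2 + 7 * q ^ 2 : ℤ) : ZMod 3) = 0 :=
            (ZMod.intCast_zmod_eq_zero_iff_dvd _ 3).mpr h3
          push_cast at hM0
          have key : ∀ a b : ZMod 3, a ^ 2 + 7 * b ^ 2 = 0 → a = 0 ∧ b = 0 := by decide
          obtain ⟨hp3, hq3⟩ := key _ _ hM0
          rw [ZMod.intCast_zmod_eq_zero_iff_dvd] at hp3 hq3
          have := hco.isUnit_of_dvd' hp3 hq3
          rw [Int.isUnit_iff] at this
          omega
        have hM12 : IsCoprime (p ^ 2 + 7 * q ^ 2) 12 := by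
          have h4 : IsCoprime (p ^ 2 + 7 * q ^ 2) 4 := by
            have : (4 : ℤ) = 2 * 2 := by norm_num
            rw [this]; exact hM2.mul_right hM2
          have : (12 : ℤ) = 4 * 3 := by norm_num
          rw [this]; exact h4.mul_right hM3
        exact hM12.mul_right (hMq.pow_right : IsCoprime _ (q ^ 4))
      obtain ⟨c, d, hcd, hdodd, hq2cd, hpat⟩ := split12 hcop12 hsumodd h1pos h2pos hprod
      have hceven : Even c := by
        rcases Int.even_or_odd c with h | h
        · exact h
        · exfalso
          obtain ⟨b, hb⟩ := hq
          have hqev : Even (q ^ 2) := ⟨2 * b ^ 2, by rw [hb]; ring⟩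
          have : Odd (c ^ 2 * d ^ 2) := (h.pow).mul (hdodd.pow)
          rw [← hq2cd] at this
          exact (Int.not_odd_iff_even.mpr hqev) this
      have hc0 : c ≠ 0 := by
        intro h
        apply hq0
        have hq20 : q ^ 2 = 0 := by rw [hq2cd, h]; ring
        exact pow_eq_zero_iff (by norm_num : (2:ℕ) ≠ 0) |>.mp hq20
      rcases hpat with hA | hB
      · -- Case A : p² = (d²-3c²)(d²-4c²)
        have hp2 : p ^ 2 = (d ^ 2 - 3 * c ^ 2) * (d ^ 2 - 4 * c ^ 2) := by
          have hps : p ^ 2 = (h1 + h2) - 7 * q ^ 2 := by linarith [hsum]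
          rw [hps, hA, hq2cd]; ring
        have hbodd : Odd (d ^ 2 - 4 * c ^ 2) := by
          obtain ⟨a, ha⟩ := hdodd
          obtain ⟨b, hb⟩ := hceven
          exact ⟨2 * a ^ 2 + 2 * a - 8 * b ^ 2, by rw [ha, hb]; ring⟩
        have hfac : IsCoprime (d ^ 2 - 3 * c ^ 2) (d ^ 2 - 4 * c ^ 2) := by
          exact helper_cop hcd hbodd
            (α := 4) (β := -4) (by ring) (γ := 16) (δ := -12) (by ring)
        obtain ⟨e, he⟩ := Int.sq_of_isCoprime hfac hp2.symm
        obtain ⟨f, hfeq⟩ := Int.sq_of_isCoprime hfac.symm (by rw [mul_comm]; exact hp2.symm)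
        rcases he with he | he <;> rcases hfeq with hfeq | hfeq
        · -- main branch : e² = d²-3c², f² = d²-4c²
          have hfodd : Odd f := by
            have h2' : Odd (f ^ 2) := by rw [← hfeq]; exact hbodd
            exact odd_of_odd_sq h2'
          have hfc : IsCoprime f c := by
            have h1' : IsCoprime (d ^ 2) (c ^ 2) := (hcd.symm.pow (m := 2) (n := 2))
            have h2' : IsCoprime (f ^ 2) (c ^ 2) := by
              have := h1'.add_mul_right_left (-4)
              have heq' : d ^ 2 + -4 * c ^ 2 = f ^ 2 := by rw [← hfeq]; ring
              rwa [heq'] at this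
            exact (h2'.of_isCoprime_of_dvd_left (dvd_pow_self _ two_ne_zero)).of_isCoprime_of_dvd_right
              (dvd_pow_self _ two_ne_zero)
          have hC1 : f ^ 2 + c ^ 2 = e ^ 2 := by rw [← he, ← hfeq]; ring
          have hC2 : f ^ 2 + 4 * c ^ 2 = d ^ 2 := by rw [← hfeq]; ring
          obtain ⟨A, B, hAB, hpar, hWeq, hcAB, hle⟩ :=
            C_to_W hfodd (Int.isCoprime_iff_gcd_eq_one.mp hfc) hC1 hC2
          -- measure decreases
          have habs : |e| ≤ |d| := by
            have h1' : e ^ 2 ≤ d ^ 2 := by nlinarith [he, sq_nonneg c]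
            nlinarith [abs_nonneg e, abs_nonneg d, sq_abs e, sq_abs d,
              mul_nonneg (abs_nonneg e) (abs_nonneg d)]
          have hc4 : 16 ≤ c ^ 4 := by
            obtain ⟨b, hb⟩ := hceven
            have hb' : c = 2 * b := by linarith [hb]
            have hbne : b ≠ 0 := by
              intro h; rw [h] at hb'; simp at hb'; exact hc0 hb'
            have hb2 : 1 ≤ b ^ 2 := by
              have := Int.one_le_abs (by simpa using hbne)
              nlinarith [sq_abs b]
            have hb4 : 1 ≤ b ^ 4 := by nlinarith [sq_nonneg (b ^ 2 - 1)]
            rw [hb']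
            nlinarith
          have hd4 : |d| ^ 4 = d ^ 4 := by
            have h1' : |d| ^ 4 = |d ^ 4| := by rw [← abs_pow]
            rw [h1', abs_of_nonneg (by positivity : (0:ℤ) ≤ d ^ 4)]
          have hdabs : 7 * |d| < d ^ 4 + 192 := by
            nlinarith [abs_nonneg d, sq_nonneg (|d| ^ 2 - 2), sq_nonneg (|d| - 2), hd4]
          have hmeas : ∀ P Q : ℤ, (P = A ∧ Q = B) ∨ (P = B ∧ Q = A) →
              (P ^ 2 + 7 * Q ^ 2).toNat < N := by
            intro P Q hPQ
            have hPQ2 : P ^ 2 + Q ^ 2 = A ^ 2 + B ^ 2 := by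
              rcases hPQ with ⟨h1', h2'⟩ | ⟨h1', h2'⟩ <;> rw [h1', h2'] <;> ring
            have hb1 : P ^ 2 + 7 * Q ^ 2 ≤ 7 * (A ^ 2 + B ^ 2) := by
              nlinarith [sq_nonneg P, sq_nonneg Q, hPQ2]
            have hb2 : P ^ 2 + 7 * Q ^ 2 < p ^ 2 + 7 * q ^ 2 := by
              calc P ^ 2 + 7 * Q ^ 2 ≤ 7 * (A ^ 2 + B ^ 2) := hb1
                _ ≤ 7 * |e| := by linarith [hle]
                _ ≤ 7 * |d| := by linarith [habs]
                _ < d ^ 4 + 192 := hdabs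
                _ ≤ d ^ 4 + 12 * c ^ 4 := by linarith [hc4]
                _ = p ^ 2 + 7 * q ^ 2 := by rw [← hsum, hA]
            have hPN : (p ^ 2 + 7 * q ^ 2).toNat < N + 1 := hN
            have hnn : (0 : ℤ) ≤ P ^ 2 + 7 * Q ^ 2 := by positivity
            have hgen : ∀ M1 M2 : ℤ, M2 < M1 → M1.toNat < N + 1 → 0 ≤ M2 → M2.toNat < N := by
              intro M1 M2 a1 a2 a3
              omega
            exact hgen _ _ hb2 hPN hnn
          rcases hpar with ⟨hAodd, hBev⟩ | ⟨hAev, hBodd⟩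
          · have hB0 : B = 0 :=
              IH A B d (hmeas A B (Or.inl ⟨rfl, rfl⟩)) hAB hAodd hBev hWeq
            exact hc0 (by rw [hcAB, hB0]; ring)
          · have hA0 : A = 0 :=
              IH B A d (hmeas B A (Or.inr ⟨rfl, rfl⟩)) hAB.symm hBodd hAev
                (by linear_combination hWeq)
            exact hc0 (by rw [hcAB, hA0]; ring)
        · -- e², -f² : p² = -(e f)² forces p = 0, impossible
          exfalso
          have : p ^ 2 + (e * f) ^ 2 = 0 := by rw [hp2, he, hfeq]; ring
          have hp0 : p = 0 := by nlinarith [sq_nonneg p, sq_nonneg (e * f)]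
          rw [hp0] at hp
          exact (Int.not_odd_iff_even.mpr Even.zero) hp
        · exfalso
          have : p ^ 2 + (e * f) ^ 2 = 0 := by rw [hp2, he, hfeq]; ring
          have hp0 : p = 0 := by nlinarith [sq_nonneg p, sq_nonneg (e * f)]
          rw [hp0] at hp
          exact (Int.not_odd_iff_even.mpr Even.zero) hp
        · -- both negative : d² + f² = 4c², impossible mod 4
          exfalso
          have hfodd : Odd f := by
            have h2' : Odd (f ^ 2) := by
              have : f ^ 2 = 4 * c ^ 2 - d ^ 2 := by linarith [hfeq]
              rw [this]
              obtain ⟨a, ha⟩ := hdodd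
              obtain ⟨b, hb⟩ := hceven
              exact ⟨8 * b ^ 2 - 2 * a ^ 2 - 2 * a - 1, by rw [ha, hb]; ring⟩
            exact odd_of_odd_sq h2'
          obtain ⟨a, ha⟩ := hdodd
          obtain ⟨b, hb⟩ := hfodd
          have heq4 : (2 * a + 1) ^ 2 + (2 * b + 1) ^ 2 - 4 * c ^ 2 = 0 := by
            rw [← ha, ← hb]
            linarith [hfeq]
          have hcast := int_cast_eq_zmod 4 heq4
          push_cast at hcast
          have key : ∀ x y z : ZMod 4, (2 * x + 1) ^ 2 + (2 * y + 1) ^ 2 - 4 * z ^ 2 ≠ 0 := by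
            decide
          exact key _ _ _ hcast
      · -- Case B : p² = (3d²-4c²)(d²-c²), impossible
        have hp2 : p ^ 2 = (3 * d ^ 2 - 4 * c ^ 2) * (d ^ 2 - c ^ 2) := by
          have hps : p ^ 2 = (h1 + h2) - 7 * q ^ 2 := by linarith [hsum]
          rw [hps, hB, hq2cd]; ring
        have hbodd : Odd (d ^ 2 - c ^ 2) := by
          obtain ⟨a, ha⟩ := hdodd
          obtain ⟨b, hb⟩ := hceven
          exact ⟨2 * a ^ 2 + 2 * a - 2 * b ^ 2, by rw [ha, hb]; ring⟩
        have hfac : IsCoprime (3 * d ^ 2 - 4 * c ^ 2) (d ^ 2 - c ^ 2) := by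
          exact helper_cop hcd hbodd
            (α := -4) (β := 12) (by ring) (γ := -4) (δ := 16) (by ring)
        obtain ⟨e, he⟩ := Int.sq_of_isCoprime hfac hp2.symm
        obtain ⟨f, hfeq⟩ := Int.sq_of_isCoprime hfac.symm (by rw [mul_comm]; exact hp2.symm)
        rcases he with he | he <;> rcases hfeq with hfeq | hfeq
        · -- e² = 3d²-4c², impossible mod 8
          exfalso
          have heodd : Odd e := by
            have h2' : Odd (e ^ 2) := by
              rw [← he]
              obtain ⟨a, ha⟩ := hdodd
              obtain ⟨b, hb⟩ := hceven
              exact ⟨6 * a ^ 2 + 6 * a - 8 * b ^ 2 + 1, by rw [ha, hb]; ring⟩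
            exact odd_of_odd_sq h2'
          obtain ⟨a, ha⟩ := hdodd
          obtain ⟨b, hb⟩ := hceven
          obtain ⟨g, hg⟩ := heodd
          have hb' : c = 2 * b := by linarith [hb]
          have heq8 : (2 * g + 1) ^ 2 - 3 * (2 * a + 1) ^ 2 + 4 * (2 * b) ^ 2 = 0 := by
            linear_combination (-1) * he - (e + (2 * g + 1)) * hg + 3 * (d + (2 * a + 1)) * ha - 4 * (c + 2 * b) * hb'
          have hcast := int_cast_eq_zmod 8 heq8
          push_cast at hcast
          have key : ∀ x y z : ZMod 8,
              (2 * x + 1) ^ 2 - 3 * (2 * y + 1) ^ 2 + 4 * (2 * z) ^ 2 ≠ 0 := by decide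
          exact key _ _ _ hcast
        · exfalso
          have : p ^ 2 + (e * f) ^ 2 = 0 := by rw [hp2, he, hfeq]; ring
          have hp0 : p = 0 := by nlinarith [sq_nonneg p, sq_nonneg (e * f)]
          rw [hp0] at hp
          exact (Int.not_odd_iff_even.mpr Even.zero) hp
        · exfalso
          have : p ^ 2 + (e * f) ^ 2 = 0 := by rw [hp2, he, hfeq]; ring
          have hp0 : p = 0 := by nlinarith [sq_nonneg p, sq_nonneg (e * f)]
          rw [hp0] at hp
          exact (Int.not_odd_iff_even.mpr Even.zero) hp
        · -- f² = c² - d², impossible mod 4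
          exfalso
          have hfodd : Odd f := by
            have h2' : Odd (f ^ 2) := by
              have : f ^ 2 = c ^ 2 - d ^ 2 := by linarith [hfeq]
              rw [this]
              obtain ⟨a, ha⟩ := hdodd
              obtain ⟨b, hb⟩ := hceven
              exact ⟨2 * b ^ 2 - 2 * a ^ 2 - 2 * a - 1, by rw [ha, hb]; ring⟩
            exact odd_of_odd_sq h2'
          obtain ⟨a, ha⟩ := hdodd
          obtain ⟨b, hb⟩ := hfodd
          have heq4 : (2 * b + 1) ^ 2 - c ^ 2 + (2 * a + 1) ^ 2 = 0 := by
            rw [← ha, ← hb]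
            linarith [hfeq]
          have hcast := int_cast_eq_zmod 4 heq4
          push_cast at hcast
          have key : ∀ x y z : ZMod 4,
              (2 * x + 1) ^ 2 - z ^ 2 + (2 * y + 1) ^ 2 ≠ 0 := by decide
          exact key _ _ _ hcast

lemma lemW {p q t : ℤ} (hco : IsCoprime p q) (hp : Odd p) (hq : Even q)
    (ht : t ^ 2 = p ^ 4 + 14 * p ^ 2 * q ^ 2 + q ^ 4) : q = 0 :=
  lemW_aux ((p ^ 2 + 7 * q ^ 2).toNat + 1) p q t (by omega) hco hp hq ht

/-! ### The quartic `t² = u⁴ - u²v² + v⁴` -/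

set_option maxHeartbeats 1000000 in
lemma lemM_even {u v t : ℤ} (hco : IsCoprime u v) (hu : Odd u) (hv : Even v)
    (ht : t ^ 2 = u ^ 4 - u ^ 2 * v ^ 2 + v ^ 4) : v = 0 := by
  by_contra hv0
  obtain ⟨w, hw⟩ := hv
  have hw' : v = 2 * w := by linarith [hw]
  have hw0 : w ≠ 0 := by
    intro h; rw [h] at hw'; simp at hw'; exact hv0 hw'
  have huw : IsCoprime u w := hco.of_isCoprime_of_dvd_right ⟨2, by linarith [hw']⟩
  set t₁ : ℤ := |t| with ht₁def
  have ht₁ : t₁ ^ 2 = u ^ 4 - 4 * u ^ 2 * w ^ 2 + 16 * w ^ 4 := by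
    rw [ht₁def, sq_abs, ht, hw']; ring
  have htodd : Odd t₁ := by
    have h2 : Odd (t₁ ^ 2) := by
      rw [ht₁]
      obtain ⟨a, ha⟩ := hu
      exact ⟨8 * a ^ 4 + 16 * a ^ 3 + 12 * a ^ 2 + 4 * a - 8 * a ^ 2 * w ^ 2 - 8 * a * w ^ 2 -
        2 * w ^ 2 + 8 * w ^ 4, by rw [ha]; ring⟩
    exact odd_of_odd_sq h2
  have hw1 : 1 ≤ w ^ 2 := by
    have := Int.one_le_abs (by simpa using hw0)
    nlinarith [sq_abs w]
  have ht₁pos : 0 < t₁ := by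
    rcases lt_or_eq_of_le (abs_nonneg t) with h | h
    · exact h
    · exfalso
      have h0 : t₁ = 0 := h.symm
      rw [h0] at ht₁
      nlinarith [sq_nonneg (u ^ 2 - 2 * w ^ 2), hw1, sq_nonneg w]
  have hXodd : Odd (u ^ 2 - 2 * w ^ 2) := by
    obtain ⟨a, ha⟩ := hu
    exact ⟨2 * a ^ 2 + 2 * a - w ^ 2, by rw [ha]; ring⟩
  have hev1 : Even (t₁ - (u ^ 2 - 2 * w ^ 2)) := htodd.sub_odd hXodd
  obtain ⟨g1, hg1⟩ := hev1
  have hg1' : t₁ - (u ^ 2 - 2 * w ^ 2) = 2 * g1 := by linarith [hg1]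
  set g2 : ℤ := g1 + (u ^ 2 - 2 * w ^ 2) with hg2def
  have hgsum : g1 + g2 = t₁ := by rw [hg2def]; linarith [hg1']
  have hgdiff : g2 - g1 = u ^ 2 - 2 * w ^ 2 := by rw [hg2def]; ring
  have hg2' : t₁ + (u ^ 2 - 2 * w ^ 2) = 2 * g2 := by rw [hg2def]; linarith [hg1']
  have hgprod : g1 * g2 = 3 * w ^ 4 := by
    have hfact : (t₁ - (u ^ 2 - 2 * w ^ 2)) * (t₁ + (u ^ 2 - 2 * w ^ 2)) = 12 * w ^ 4 := by
      linear_combination ht₁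
    rw [hg1', hg2'] at hfact
    exact mul_left_cancel₀ (by norm_num : (4:ℤ) ≠ 0) (by linear_combination hfact)
  have hw4pos : (0 : ℤ) < 3 * w ^ 4 := by positivity
  have hg2pos : 0 < g2 := by
    by_contra hng
    push_neg at hng
    have hg1nn : 0 < g1 := by linarith
    nlinarith [hgprod, hw4pos]
  have hg1pos : 0 < g1 := by
    by_contra hng
    push_neg at hng
    nlinarith [hgprod, hw4pos, hg2pos]
  have hgsumodd : Odd (g1 + g2) := by rw [hgsum]; exact htodd
  have hcop12 : IsCoprime g1 g2 := by
    apply isCoprime_of_add_mul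
    rw [hgsum, hgprod]
    have htw : IsCoprime t₁ w := by
      obtain ⟨x, y, hxy⟩ := (huw.pow : IsCoprime (u ^ 4) (w ^ 1))
      exact ⟨x * t₁, 4 * x * u ^ 2 * w - 16 * x * w ^ 3 + y * w ^ 0, by
        have hy : y * w ^ 1 = y * w := by ring
        linear_combination x * ht₁ + hxy⟩
    have ht3 : IsCoprime t₁ 3 := (isCoprime_three (three_not_dvd_M huw ht₁)).symm
    exact ht3.mul_right (htw.pow_right : IsCoprime _ (w ^ 4))
  obtain ⟨c, d, hcd, hdodd, hceven, hw2cd, hpat⟩ := split3 hcop12 hgsumodd hg1pos hg2pos hgprod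
  have hc0 : c ≠ 0 := by
    intro h
    apply hw0
    have hw20 : w ^ 2 = 0 := by rw [hw2cd, h]; ring
    exact pow_eq_zero_iff (by norm_num : (2:ℕ) ≠ 0) |>.mp hw20
  have hu2 : u ^ 2 = 2 * (c ^ 2 * d ^ 2) + (g2 - g1) := by
    rw [hgdiff, ← hw2cd]; ring
  -- four patterns
  rcases hpat with ⟨hA1, hA2⟩ | ⟨hA1, hA2⟩ | ⟨hA1, hA2⟩ | ⟨hA1, hA2⟩
  · -- g1 = c⁴, g2 = 3d⁴ : u² = (3d²-c²)(d²+c²) ; impossible mod 8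
    exfalso
    have hp2 : u ^ 2 = (3 * d ^ 2 - c ^ 2) * (d ^ 2 + c ^ 2) := by
      rw [hu2, hA1, hA2]; ring
    have hbodd : Odd (d ^ 2 + c ^ 2) := by
      obtain ⟨a, ha⟩ := hdodd
      obtain ⟨b, hb⟩ := hceven
      exact ⟨2 * a ^ 2 + 2 * a + 2 * b ^ 2, by rw [ha, hb]; ring⟩
    have hfac : IsCoprime (3 * d ^ 2 - c ^ 2) (d ^ 2 + c ^ 2) := by
      exact helper_cop hcd hbodd
        (α := -1) (β := 3) (by ring) (γ := 1) (δ := 1) (by ring)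
    obtain ⟨e, he⟩ := Int.sq_of_isCoprime hfac hp2.symm
    have hbpos : 0 < d ^ 2 + c ^ 2 := by positivity
    have hapos : 0 ≤ 3 * d ^ 2 - c ^ 2 := by
      by_contra hneg
      push_neg at hneg
      nlinarith [hp2, sq_nonneg u]
    have he' : 3 * d ^ 2 - c ^ 2 = e ^ 2 := by
      rcases he with h | h
      · exact h
      · have he0 : e = 0 := by nlinarith [sq_nonneg e]
        rw [he0] at h ⊢; simpa using h
    have heodd : Odd e := by
      have h2' : Odd (e ^ 2) := by
        rw [← he']
        obtain ⟨a, ha⟩ := hdodd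
        obtain ⟨b, hb⟩ := hceven
        exact ⟨6 * a ^ 2 + 6 * a - 2 * b ^ 2 + 1, by rw [ha, hb]; ring⟩
      exact odd_of_odd_sq h2'
    obtain ⟨a, ha⟩ := hdodd
    obtain ⟨b, hb⟩ := hceven
    obtain ⟨g, hg⟩ := heodd
    have hb' : c = 2 * b := by linarith [hb]
    have heq8 : (2 * g + 1) ^ 2 - 3 * (2 * a + 1) ^ 2 + (2 * b) ^ 2 = 0 := by
      rw [← ha, ← hg, ← hb']
      linarith [he']
    have hcast := int_cast_eq_zmod 8 heq8
    push_cast at hcast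
    have key : ∀ x y z : ZMod 8,
        (2 * x + 1) ^ 2 - 3 * (2 * y + 1) ^ 2 + (2 * z) ^ 2 ≠ 0 := by decide
    exact key _ _ _ hcast
  · -- g1 = 3c⁴, g2 = d⁴ : u² = (d²+3c²)(d²-c²) ; the main branch
    have hp2 : u ^ 2 = (d ^ 2 + 3 * c ^ 2) * (d ^ 2 - c ^ 2) := by
      rw [hu2, hA1, hA2]; ring
    have hbodd : Odd (d ^ 2 - c ^ 2) := by
      obtain ⟨a, ha⟩ := hdodd
      obtain ⟨b, hb⟩ := hceven
      exact ⟨2 * a ^ 2 + 2 * a - 2 * b ^ 2, by rw [ha, hb]; ring⟩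
    have hfac : IsCoprime (d ^ 2 + 3 * c ^ 2) (d ^ 2 - c ^ 2) := by
      exact helper_cop hcd hbodd
        (α := 1) (β := -1) (by ring) (γ := 1) (δ := 3) (by ring)
    obtain ⟨e, he⟩ := Int.sq_of_isCoprime hfac hp2.symm
    obtain ⟨f, hfeq⟩ := Int.sq_of_isCoprime hfac.symm (by rw [mul_comm]; exact hp2.symm)
    have hapos : 0 < d ^ 2 + 3 * c ^ 2 := by
      obtain ⟨a, ha⟩ := hdodd
      nlinarith [sq_nonneg c, sq_nonneg (2 * a + 1), sq_nonneg a, ha]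
    have he' : d ^ 2 + 3 * c ^ 2 = e ^ 2 := by
      rcases he with h | h
      · exact h
      · exfalso
        nlinarith [sq_nonneg e]
    have hbnn : 0 ≤ d ^ 2 - c ^ 2 := by
      by_contra hneg
      push_neg at hneg
      nlinarith [hp2, sq_nonneg u]
    have hf' : d ^ 2 - c ^ 2 = f ^ 2 := by
      rcases hfeq with h | h
      · exact h
      · have hf0 : f = 0 := by nlinarith [sq_nonneg f]
        rw [hf0] at h ⊢; simpa using h
    have hfodd : Odd f := by
      have h2' : Odd (f ^ 2) := by rw [← hf']; exact hbodd
      exact odd_of_odd_sq h2'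
    have hfc : IsCoprime f c := by
      have h1' : IsCoprime (d ^ 2) (c ^ 2) := (hcd.symm.pow (m := 2) (n := 2))
      have h2' : IsCoprime (f ^ 2) (c ^ 2) := by
        have := h1'.add_mul_right_left (-1)
        have heq' : d ^ 2 + -1 * c ^ 2 = f ^ 2 := by rw [← hf']; ring
        rwa [heq'] at this
      exact (h2'.of_isCoprime_of_dvd_left (dvd_pow_self _ two_ne_zero)).of_isCoprime_of_dvd_right
        (dvd_pow_self _ two_ne_zero)
    have hC1 : f ^ 2 + c ^ 2 = d ^ 2 := by rw [← hf']; ring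
    have hC2 : f ^ 2 + 4 * c ^ 2 = e ^ 2 := by rw [← hf', ← he']; ring
    obtain ⟨A, B, hAB, hpar, hWeq, hcAB, -⟩ :=
      C_to_W hfodd (Int.isCoprime_iff_gcd_eq_one.mp hfc) hC1 hC2
    rcases hpar with ⟨hAodd, hBev⟩ | ⟨hAev, hBodd⟩
    · have hB0 : B = 0 := lemW hAB hAodd hBev hWeq
      exact hc0 (by rw [hcAB, hB0]; ring)
    · have hA0 : A = 0 := lemW (p := B) (q := A) (t := e) hAB.symm hBodd hAev
        (by linear_combination hWeq)
      exact hc0 (by rw [hcAB, hA0]; ring)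
  · -- g1 = 3d⁴, g2 = c⁴ : u² = (c²+3d²)(c²-d²) ; impossible mod 4
    exfalso
    have hp2 : u ^ 2 = (c ^ 2 + 3 * d ^ 2) * (c ^ 2 - d ^ 2) := by
      rw [hu2, hA1, hA2]; ring
    have hbodd : Odd (c ^ 2 - d ^ 2) := by
      obtain ⟨a, ha⟩ := hdodd
      obtain ⟨b, hb⟩ := hceven
      exact ⟨2 * b ^ 2 - 2 * a ^ 2 - 2 * a - 1, by rw [ha, hb]; ring⟩
    have hfac : IsCoprime (c ^ 2 + 3 * d ^ 2) (c ^ 2 - d ^ 2) := by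
      exact helper_cop hcd hbodd
        (α := 1) (β := 3) (by ring) (γ := 1) (δ := -1) (by ring)
    obtain ⟨f, hfeq⟩ := Int.sq_of_isCoprime hfac.symm (by rw [mul_comm]; exact hp2.symm)
    have hapos : 0 < c ^ 2 + 3 * d ^ 2 := by
      obtain ⟨a, ha⟩ := hdodd
      nlinarith [sq_nonneg c, sq_nonneg (2 * a + 1), sq_nonneg a, ha]
    have hbnn : 0 ≤ c ^ 2 - d ^ 2 := by
      by_contra hneg
      push_neg at hneg
      nlinarith [hp2, sq_nonneg u]
    have hf' : c ^ 2 - d ^ 2 = f ^ 2 := by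
      rcases hfeq with h | h
      · exact h
      · have hf0 : f = 0 := by nlinarith [sq_nonneg f]
        rw [hf0] at h ⊢; simpa using h
    have hfodd : Odd f := by
      have h2' : Odd (f ^ 2) := by rw [← hf']; exact hbodd
      exact odd_of_odd_sq h2'
    obtain ⟨a, ha⟩ := hdodd
    obtain ⟨b, hb⟩ := hfodd
    have heq4 : (2 * b + 1) ^ 2 - c ^ 2 + (2 * a + 1) ^ 2 = 0 := by
      rw [← ha, ← hb]
      linarith [hf']
    have hcast := int_cast_eq_zmod 4 heq4
    push_cast at hcast
    have key : ∀ x y z : ZMod 4,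
        (2 * x + 1) ^ 2 - z ^ 2 + (2 * y + 1) ^ 2 ≠ 0 := by decide
    exact key _ _ _ hcast
  · -- g1 = d⁴, g2 = 3c⁴ : u² = (3c²-d²)(c²+d²) ; impossible mod 8
    exfalso
    have hp2 : u ^ 2 = (3 * c ^ 2 - d ^ 2) * (c ^ 2 + d ^ 2) := by
      rw [hu2, hA1, hA2]; ring
    have hbodd : Odd (c ^ 2 + d ^ 2) := by
      obtain ⟨a, ha⟩ := hdodd
      obtain ⟨b, hb⟩ := hceven
      exact ⟨2 * a ^ 2 + 2 * a + 2 * b ^ 2, by rw [ha, hb]; ring⟩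
    have hfac : IsCoprime (3 * c ^ 2 - d ^ 2) (c ^ 2 + d ^ 2) := by
      exact helper_cop hcd hbodd
        (α := 1) (β := 1) (by ring) (γ := -1) (δ := 3) (by ring)
    obtain ⟨e, he⟩ := Int.sq_of_isCoprime hfac hp2.symm
    have hbpos : 0 < c ^ 2 + d ^ 2 := by
      obtain ⟨a, ha⟩ := hdodd
      nlinarith [sq_nonneg c, sq_nonneg a, ha]
    have hann : 0 ≤ 3 * c ^ 2 - d ^ 2 := by
      by_contra hneg
      push_neg at hneg
      nlinarith [hp2, sq_nonneg u]
    have he' : 3 * c ^ 2 - d ^ 2 = e ^ 2 := by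
      rcases he with h | h
      · exact h
      · have he0 : e = 0 := by nlinarith [sq_nonneg e]
        rw [he0] at h ⊢; simpa using h
    have heodd : Odd e := by
      have h2' : Odd (e ^ 2) := by
        rw [← he']
        obtain ⟨a, ha⟩ := hdodd
        obtain ⟨b, hb⟩ := hceven
        exact ⟨6 * b ^ 2 - 2 * a ^ 2 - 2 * a - 1, by rw [ha, hb]; ring⟩
      exact odd_of_odd_sq h2'
    obtain ⟨a, ha⟩ := hdodd
    obtain ⟨b, hb⟩ := hceven
    obtain ⟨g, hg⟩ := heodd
    have hb' : c = 2 * b := by linarith [hb]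
    have heq8 : (2 * g + 1) ^ 2 - 3 * (2 * b) ^ 2 + (2 * a + 1) ^ 2 = 0 := by
      rw [← ha, ← hg, ← hb']
      linarith [he']
    have hcast := int_cast_eq_zmod 8 heq8
    push_cast at hcast
    have key : ∀ x y z : ZMod 8,
        (2 * x + 1) ^ 2 - 3 * (2 * z) ^ 2 + (2 * y + 1) ^ 2 ≠ 0 := by decide
    exact key _ _ _ hcast

lemma lemM {u v t : ℤ} (hco : IsCoprime u v)
    (ht : t ^ 2 = u ^ 4 - u ^ 2 * v ^ 2 + v ^ 4) : u * v = 0 ∨ u ^ 2 = v ^ 2 := by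
  rcases Int.even_or_odd u with hu | hu <;> rcases Int.even_or_odd v with hv | hv
  · exact absurd (not_both_even hco hu hv) (by simp)
  · -- u even, v odd
    have := lemM_even (u := v) (v := u) (t := t) hco.symm hv hu (by linear_combination ht)
    left; rw [this]; ring
  · -- u odd, v even
    have := lemM_even hco hu hv ht
    left; rw [this]; ring
  · -- both odd
    have hev : Even (u + v) := hu.add_odd hv
    obtain ⟨p, hp⟩ := hev
    have hp' : u + v = 2 * p := by linarith [hp]
    have hev2 : Even (u - v) := hu.sub_odd hv
    obtain ⟨q, hq⟩ := hev2
    have hq' : u - v = 2 * q := by linarith [hq]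
    have hu' : u = p + q := by omega
    have hv' : v = p - q := by omega
    have hcopq : IsCoprime p q := by
      obtain ⟨x, y, hxy⟩ := hco
      exact ⟨x + y, x - y, by linear_combination hxy - x * hu' - y * hv'⟩
    have htpq : t ^ 2 = p ^ 4 + 14 * p ^ 2 * q ^ 2 + q ^ 4 := by
      rw [hu', hv'] at ht
      linear_combination ht
    have hparity : (Odd p ∧ Even q) ∨ (Even p ∧ Odd q) := by
      rcases Int.even_or_odd p with h | h <;> rcases Int.even_or_odd q with h' | h'
      · exfalso
        have : Even u := by rw [hu']; exact h.add h'
        exact (Int.not_odd_iff_even.mpr this) hu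
      · exact Or.inr ⟨h, h'⟩
      · exact Or.inl ⟨h, h'⟩
      · exfalso
        have : Even u := by rw [hu']; exact h.add_odd h'
        exact (Int.not_odd_iff_even.mpr this) hu
    rcases hparity with ⟨hpo, hqe⟩ | ⟨hpe, hqo⟩
    · have hq0 : q = 0 := lemW hcopq hpo hqe htpq
      right
      rw [hu', hv', hq0]; ring
    · have hp0 : p = 0 := lemW (p := q) (q := p) (t := t) hcopq.symm hqo hpe (by linear_combination htpq)
      right
      rw [hu', hv', hp0]; ring

/-! ### Rational points on `y² = x³ - x² + x` -/

lemma rat_sq_int (r : ℚ) (n : ℤ) (h : r ^ 2 = (n : ℚ)) : ∃ m : ℤ, r = (m : ℚ) := by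
  have hden : (r.den : ℚ) ≠ 0 := by exact_mod_cast r.den_nz
  have hnum : (r.num : ℚ) ^ 2 = (n : ℚ) * (r.den : ℚ) ^ 2 := by
    rw [← Rat.num_div_den r] at h
    field_simp at h
    linear_combination h
  have hint : r.num ^ 2 = n * (r.den : ℤ) ^ 2 := by exact_mod_cast hnum
  have hdvd : ((r.den : ℤ) ^ 2) ∣ r.num ^ 2 := ⟨n, by linarith [hint]⟩
  have hcop : Nat.Coprime r.num.natAbs r.den := r.reduced
  have hcop2 : Nat.Coprime (r.num.natAbs ^ 2) (r.den ^ 2) := Nat.Coprime.pow 2 2 hcop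
  have hdvdnat : r.den ^ 2 ∣ r.num.natAbs ^ 2 := by
    have := Int.natAbs_dvd_natAbs.mpr hdvd
    simpa [Int.natAbs_pow] using this
  have hden1 : r.den ^ 2 = 1 := Nat.Coprime.eq_one_of_dvd hcop2.symm hdvdnat
  have : r.den = 1 := by nlinarith [r.pos]
  exact ⟨r.num, by rw [← Rat.num_div_den r, this]; simp⟩

lemma rat_points (x y : ℚ) (h : y ^ 2 = x ^ 3 - x ^ 2 + x) :
    (x = 0 ∧ y = 0) ∨ (x = 1 ∧ y = 1) ∨ (x = 1 ∧ y = -1) := by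
  set a : ℤ := x.num with ha
  set b : ℤ := (x.den : ℤ) with hb
  have hbpos : (0 : ℤ) < b := by rw [hb]; exact_mod_cast x.pos
  have hbQ : (b : ℚ) ≠ 0 := by
    intro h'
    rw [show ((b : ℤ) : ℚ) = (x.den : ℚ) from by rw [hb]; push_cast; ring] at h'
    exact (by exact_mod_cast x.den_nz : ((x.den : ℚ)) ≠ 0) h'
  have hxab : x = (a : ℚ) / (b : ℚ) := by rw [ha, hb]; exact_mod_cast (Rat.num_div_den x).symm
  have hcop : IsCoprime a b := by
    rw [Int.isCoprime_iff_gcd_eq_one]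
    have := x.reduced
    simpa [Int.gcd, ha, hb] using this
  -- Y = y * b² is an integer
  have hyx : y ^ 2 = ((a : ℚ) / (b : ℚ)) ^ 3 - ((a : ℚ) / (b : ℚ)) ^ 2 + ((a : ℚ) / (b : ℚ)) := by
    rw [← hxab]; exact h
  have hY2 : (y * (b : ℚ) ^ 2) ^ 2 = ((a * b * (a ^ 2 - a * b + b ^ 2) : ℤ) : ℚ) := by
    have h1 : (y * (b : ℚ) ^ 2) ^ 2 = y ^ 2 * (b : ℚ) ^ 4 := by ring
    rw [h1, hyx]
    push_cast
    field_simp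
  obtain ⟨c, hc⟩ := rat_sq_int _ _ hY2
  have hcint : c ^ 2 = a * b * (a ^ 2 - a * b + b ^ 2) := by
    have := hY2
    rw [hc] at this
    exact_mod_cast this
  have hNpos : 0 < a ^ 2 - a * b + b ^ 2 := by nlinarith [sq_nonneg (2 * a - b), hbpos]
  have hcopN : IsCoprime (a * b) (a ^ 2 - a * b + b ^ 2) := by
    have h1 : IsCoprime a (a ^ 2 - a * b + b ^ 2) := by
      have h' : IsCoprime a (b ^ 2) := hcop.pow_right
      have := h'.add_mul_left_right (a - b)
      have heq' : b ^ 2 + a * (a - b) = a ^ 2 - a * b + b ^ 2 := by ring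
      rwa [heq'] at this
    have h2 : IsCoprime b (a ^ 2 - a * b + b ^ 2) := by
      have h' : IsCoprime b (a ^ 2) := hcop.symm.pow_right
      have := h'.add_mul_left_right (b - a)
      have heq' : a ^ 2 + b * (b - a) = a ^ 2 - a * b + b ^ 2 := by ring
      rwa [heq'] at this
    exact h1.mul_left h2
  -- the "x = 0" branch packaged
  have hx0 : a = 0 → (x = 0 ∧ y = 0) ∨ (x = 1 ∧ y = 1) ∨ (x = 1 ∧ y = -1) := by
    intro ha0
    left
    have hx : x = 0 := by rw [hxab, ha0]; simp
    refine ⟨hx, ?_⟩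
    rw [hx] at h
    have : y ^ 2 = 0 := by rw [h]; ring
    exact pow_eq_zero_iff (n := 2) (by norm_num) |>.mp this
  obtain ⟨s, hs⟩ := Int.sq_of_isCoprime hcopN hcint.symm
  rcases hs with hs | hs
  · -- a*b = s²
    obtain ⟨r, hr⟩ := Int.sq_of_isCoprime hcopN.symm (by rw [mul_comm]; exact hcint.symm)
    have hrN : a ^ 2 - a * b + b ^ 2 = r ^ 2 := by
      rcases hr with h' | h'
      · exact h'
      · exfalso; nlinarith [sq_nonneg r]
    obtain ⟨α, hα⟩ := Int.sq_of_isCoprime hcop hs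
    obtain ⟨β, hβ⟩ := Int.sq_of_isCoprime hcop.symm (by rw [mul_comm]; exact hs)
    have hβ' : b = β ^ 2 := by
      rcases hβ with h' | h'
      · exact h'
      · exfalso; nlinarith [sq_nonneg β]
    rcases hα with hα | hα
    · -- a = α²
      have hcopαβ : IsCoprime α β := by
        have h3 : IsCoprime (α ^ 2) (β ^ 2) := by rw [← hα, ← hβ']; exact hcop
        exact (h3.of_isCoprime_of_dvd_left (dvd_pow_self _ two_ne_zero)).of_isCoprime_of_dvd_right
          (dvd_pow_self _ two_ne_zero)
      have hquart : r ^ 2 = α ^ 4 - α ^ 2 * β ^ 2 + β ^ 4 := by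
        rw [← hrN, hα, hβ']; ring
      rcases lemM hcopαβ hquart with h' | h'
      · -- αβ = 0 : then α = 0 (since b = β² > 0), so a = 0
        have hβ0 : β ≠ 0 := by
          intro h''
          rw [h''] at hβ'
          simp at hβ'
          omega
        have hα0 : α = 0 := by
          rcases mul_eq_zero.mp h' with h'' | h''
          · exact h''
          · exact absurd h'' hβ0
        exact hx0 (by rw [hα, hα0]; ring)
      · -- α² = β² : a = b, so x = 1
        have hab : a = b := by rw [hα, hβ']; exact h'
        have hx1 : x = 1 := by rw [hxab, hab]; field_simp
        right
        rw [hx1] at h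
        have hy2 : y ^ 2 = 1 := by rw [h]; ring
        have : (y - 1) * (y + 1) = 0 := by linear_combination hy2
        rcases mul_eq_zero.mp this with h'' | h''
        · left; exact ⟨hx1, by linarith [h'']⟩
        · right; exact ⟨hx1, by linarith [h'']⟩
    · -- a = -α² : forces a = 0
      have : s ^ 2 + (α * β) ^ 2 = 0 := by
        rw [← hs, hα, hβ']; ring
      have hαβ : α * β = 0 ∧ s = 0 := by
        constructor <;> nlinarith [sq_nonneg s, sq_nonneg (α * β)]
      have hβ0 : β ≠ 0 := by
        intro h''
        rw [h''] at hβ'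
        simp at hβ'
        omega
      have hα0 : α = 0 := by
        rcases mul_eq_zero.mp hαβ.1 with h'' | h''
        · exact h''
        · exact absurd h'' hβ0
      exact hx0 (by rw [hα, hα0]; ring)
  · -- a*b = -s² : then c² ≤ 0 so everything is 0
    have : c ^ 2 + s ^ 2 * (a ^ 2 - a * b + b ^ 2) = 0 := by
      rw [hcint, hs]; ring
    have hs0 : s = 0 := by nlinarith [sq_nonneg c, sq_nonneg s, hNpos]
    have hab0 : a * b = 0 := by rw [hs, hs0]; ring
    have ha0 : a = 0 := by
      rcases mul_eq_zero.mp hab0 with h' | h'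
      · exact h'
      · omega
    exact hx0 ha0

end E1aux


/-! ### The main theorem -/

namespace E1aux

lemma ea1 : E₁.toAffine.a₁ = 0 := rfl
lemma ea2 : E₁.toAffine.a₂ = -1 := rfl
lemma ea3 : E₁.toAffine.a₃ = 0 := rfl
lemma ea4 : E₁.toAffine.a₄ = 1 := rfl
lemma ea6 : E₁.toAffine.a₆ = 0 := rfl

lemma negY_eq (x y : ℚ) : E₁.toAffine.negY x y = -y := by
  rw [WeierstrassCurve.Affine.negY, ea1, ea3]; ring

lemma equation_iff' (x y : ℚ) : E₁.toAffine.Equation x y ↔ y ^ 2 = x ^ 3 - x ^ 2 + x := by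
  rw [WeierstrassCurve.Affine.equation_iff, ea1, ea2, ea3, ea4, ea6]
  constructor <;> intro h <;> linear_combination h

lemma h00 : E₁.toAffine.Nonsingular 0 0 := by
  rw [WeierstrassCurve.Affine.nonsingular_iff, ea1, ea2, ea4, equation_iff']
  refine ⟨by norm_num, Or.inl (by norm_num)⟩

lemma h11 : E₁.toAffine.Nonsingular 1 1 := by
  rw [WeierstrassCurve.Affine.nonsingular_iff, ea1, ea2, ea4, equation_iff']
  refine ⟨by norm_num, Or.inl (by norm_num)⟩

lemma h1m1 : E₁.toAffine.Nonsingular 1 (-1) := by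
  rw [WeierstrassCurve.Affine.nonsingular_iff, ea1, ea2, ea4, equation_iff']
  refine ⟨by norm_num, Or.inl (by norm_num)⟩

lemma some_eq_some {x1 y1 x2 y2 : ℚ} (hx : x1 = x2) (hy : y1 = y2)
    (h1 : E₁.toAffine.Nonsingular x1 y1) (h2 : E₁.toAffine.Nonsingular x2 y2) :
    WeierstrassCurve.Affine.Point.some _ _ h1 = WeierstrassCurve.Affine.Point.some _ _ h2 := by
  subst hx; subst hy; rfl

lemma hclass (P : E₁.toAffine.Point) :
    P = 0 ∨ P = .some _ _ h00 ∨ P = .some _ _ h11 ∨ P = .some _ _ h1m1 := by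
  cases P with
  | zero => exact Or.inl rfl
  | @some x y h =>
      have heq : y ^ 2 = x ^ 3 - x ^ 2 + x := (equation_iff' x y).mp h.1
      rcases rat_points x y heq with ⟨hx, hy⟩ | ⟨hx, hy⟩ | ⟨hx, hy⟩
      · exact Or.inr (Or.inl (some_eq_some hx hy h h00))
      · exact Or.inr (Or.inr (Or.inl (some_eq_some hx hy h h11)))
      · exact Or.inr (Or.inr (Or.inr (some_eq_some hx hy h h1m1)))

lemma hy11 : (1 : ℚ) ≠ E₁.toAffine.negY 1 1 := by rw [negY_eq]; norm_num

lemma slope11 : E₁.toAffine.slope 1 1 1 1 = 1 := by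
  rw [WeierstrassCurve.Affine.slope_of_Y_ne rfl hy11, negY_eq, ea1, ea2, ea4]
  norm_num

lemma addTT : (WeierstrassCurve.Affine.Point.some _ _ h11) + .some _ _ h11 = .some _ _ h00 := by
  rw [WeierstrassCurve.Affine.Point.add_self_of_Y_ne hy11]
  apply some_eq_some
  · rw [WeierstrassCurve.Affine.addX, slope11, ea1, ea2]; norm_num
  · rw [WeierstrassCurve.Affine.addY, WeierstrassCurve.Affine.negAddY,
      WeierstrassCurve.Affine.addX, slope11, negY_eq]
    norm_num [ea1, ea2, ea3, ea4]

lemma slope01 : E₁.toAffine.slope 0 1 0 1 = 1 := by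
  rw [WeierstrassCurve.Affine.slope_of_X_ne (by norm_num)]
  norm_num

lemma add0T : (WeierstrassCurve.Affine.Point.some _ _ h00) + .some _ _ h11 = .some _ _ h1m1 := by
  rw [WeierstrassCurve.Affine.Point.add_of_X_ne (by norm_num : (0:ℚ) ≠ 1)]
  apply some_eq_some
  · rw [WeierstrassCurve.Affine.addX, slope01, ea1, ea2]; norm_num
  · rw [WeierstrassCurve.Affine.addY, negY_eq, WeierstrassCurve.Affine.negAddY,
      WeierstrassCurve.Affine.addX, slope01]
    norm_num [ea1, ea2, ea3, ea4]

lemma add00 : (WeierstrassCurve.Affine.Point.some _ _ h00) + .some _ _ h00 = 0 := by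
  apply WeierstrassCurve.Affine.Point.add_of_Y_eq rfl
  rw [negY_eq]; norm_num

end E1aux

open E1aux WeierstrassCurve.Affine in
theorem E1_rational_points :
    (∀ P : E₁.toAffine.Point,
      P = 0 ∨
      (∃ h : E₁.toAffine.Nonsingular 0 0, P = WeierstrassCurve.Affine.Point.some _ _ h) ∨
      (∃ h : E₁.toAffine.Nonsingular 1 1, P = WeierstrassCurve.Affine.Point.some _ _ h) ∨
      (∃ h : E₁.toAffine.Nonsingular 1 (-1), P = WeierstrassCurve.Affine.Point.some _ _ h)) ∧
    Nonempty (E₁.toAffine.Point ≃+ ZMod 4) := by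
  constructor
  · intro P
    rcases hclass P with h | h | h | h
    · exact Or.inl h
    · exact Or.inr (Or.inl ⟨h00, h⟩)
    · exact Or.inr (Or.inr (Or.inl ⟨h11, h⟩))
    · exact Or.inr (Or.inr (Or.inr ⟨h1m1, h⟩))
  · -- the group is cyclic of order 4, generated by (1,1)
    set T : E₁.toAffine.Point := .some _ _ h11 with hT
    have h2T : (2 : ℤ) • T = WeierstrassCurve.Affine.Point.some _ _ h00 := by
      rw [two_zsmul, hT, addTT]
    have h3T : (3 : ℤ) • T = WeierstrassCurve.Affine.Point.some _ _ h1m1 := by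
      have h3 : (3 : ℤ) = 2 + 1 := by norm_num
      rw [h3, add_zsmul, one_zsmul, h2T, hT, add0T]
    have h4T : (4 : ℤ) • T = 0 := by
      have h4 : (4 : ℤ) = 2 + 2 := by norm_num
      rw [h4, add_zsmul, h2T, add00]
    set f : ℤ →+ E₁.toAffine.Point := zmultiplesHom _ T with hf
    have hf4 : f ((4 : ℕ) : ℤ) = 0 := by
      have : ((4 : ℕ) : ℤ) = (4 : ℤ) := by norm_num
      rw [this, hf]
      exact h4T
    set F : ZMod 4 →+ E₁.toAffine.Point := ZMod.lift 4 ⟨f, hf4⟩ with hF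
    have hF1 : F 1 = T := by
      have : ((1 : ℤ) : ZMod 4) = 1 := by norm_cast
      rw [← this, hF, ZMod.lift_coe]
      exact one_zsmul T
    have hF2 : F 2 = WeierstrassCurve.Affine.Point.some _ _ h00 := by
      have : ((2 : ℤ) : ZMod 4) = 2 := by norm_cast
      rw [← this, hF, ZMod.lift_coe]
      exact h2T
    have hF3 : F 3 = WeierstrassCurve.Affine.Point.some _ _ h1m1 := by
      have : ((3 : ℤ) : ZMod 4) = 3 := by norm_cast
      rw [← this, hF, ZMod.lift_coe]
      exact h3T
    have hsurj : Function.Surjective F := by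
      intro P
      rcases hclass P with h | h | h | h
      · exact ⟨0, by rw [map_zero, h]⟩
      · exact ⟨2, by rw [hF2, h]⟩
      · exact ⟨1, by rw [hF1, h, hT]⟩
      · exact ⟨3, by rw [hF3, h]⟩
    have hinj : Function.Injective F := by
      rw [injective_iff_map_eq_zero]
      intro a ha
      have hcases : ∀ b : ZMod 4, b = 0 ∨ b = 1 ∨ b = 2 ∨ b = 3 := by decide
      rcases hcases a with h | h | h | h
      · exact h
      · exfalso
        rw [h, hF1, hT] at ha
        exact WeierstrassCurve.Affine.Point.some_ne_zero _ ha
      · exfalso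
        rw [h, hF2] at ha
        exact WeierstrassCurve.Affine.Point.some_ne_zero _ ha
      · exfalso
        rw [h, hF3] at ha
        exact WeierstrassCurve.Affine.Point.some_ne_zero _ ha
    exact ⟨(AddEquiv.ofBijective F ⟨hinj, hsurj⟩).symm⟩
end
end

section
/- The elliptic curve E₁⁻¹ : y² = x³ + x² + x (the quadratic twist by −1 of y² = x³ − x² + x) has exactly two rational points: the point at infinity and the affine point (0,0). In particular, E₁⁻¹(ℚ) is finite of order 2 (Mordell–Weil rank 0). -/
set_option maxHeartbeats 1000000
set_option linter.unnecessarySeqFocus false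
set_option linter.deprecated false

noncomputable section


lemma nat_split {x y m n : ℕ} (hx : x ≠ 0) (hm : m ≠ 0) (h : x * y = m * n) :
    ∃ a b c d, x = a * b ∧ m = a * c ∧ y = c * d ∧ n = b * d ∧ Nat.Coprime b c := by
  have hg : 0 < Nat.gcd x m := Nat.gcd_pos_of_pos_left m (Nat.pos_of_ne_zero hx)
  set a := Nat.gcd x m with ha
  have hax : a ∣ x := Nat.gcd_dvd_left x m
  have ham : a ∣ m := Nat.gcd_dvd_right x m
  obtain ⟨b, hb⟩ := hax
  obtain ⟨c, hc⟩ := ham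
  have hbc : Nat.Coprime b c := by
    have := Nat.coprime_div_gcd_div_gcd hg
    rwa [← ha, hb, hc, Nat.mul_div_cancel_left _ hg, Nat.mul_div_cancel_left _ hg] at this
  have hc0 : c ≠ 0 := by rintro rfl; exact hm (by simp [hc])
  have hby : b * y = c * n := by
    have : a * (b * y) = a * (c * n) := by rw [← mul_assoc, ← mul_assoc, ← hb, ← hc]; exact h
    exact Nat.eq_of_mul_eq_mul_left hg this
  have hcy : c ∣ y := (Nat.Coprime.dvd_of_dvd_mul_left hbc.symm ⟨n, hby⟩)
  obtain ⟨d, hd⟩ := hcy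
  refine ⟨a, b, c, d, hb, hc, hd, ?_, hbc⟩
  have : c * (b * d) = c * n := by rw [← hby, hd]; ring
  exact (Nat.eq_of_mul_eq_mul_left (Nat.pos_of_ne_zero hc0) this).symm

lemma odd_sq_parity {a b s : ℤ} (ha : Odd a) (hb : Odd b) (h : a^2+b^2 = 4*s) : False := by
  obtain ⟨A, rfl⟩ := ha
  obtain ⟨B, rfl⟩ := hb
  obtain ⟨K, hK⟩ : ∃ K : ℤ, A^2 + A + B^2 + B = K := ⟨_, rfl⟩
  have h4 : 4*K + 2 = 4*s := by linear_combination h - 4*hK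
  omega

lemma fermat_aux (z : ℕ)
    (IH : ∀ z' : ℕ, z' < z → ∀ x y : ℤ, x^4 + x^2*y^2 + y^4 = (z':ℤ)^2 → x * y = 0)
    (x y : ℤ) (hx : 0 < x) (hy : 0 < y) (hgcd : Int.gcd x y = 1)
    (hxo : Odd x) (hye : Even y) (heq : x^4 + x^2*y^2 + y^4 = (z:ℤ)^2) : False := by
  -- z is odd
  have hzo : Odd (z:ℤ) := by
    have h1 : Odd ((z:ℤ)^2) := by
      rw [← heq]
      have o1 : Odd (x^4) := hxo.pow
      have e2 : Even (y^2) := hye.pow_of_ne_zero two_ne_zero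
      have e3 : Even (x^2*y^2) := e2.mul_left _
      have e4 : Even (y^4) := hye.pow_of_ne_zero (by norm_num)
      exact (o1.add_even e3).add_even e4
    rcases Int.even_or_odd (z:ℤ) with h | h
    · exact absurd h1 (Int.not_odd_iff_even.mpr (h.pow_of_ne_zero two_ne_zero))
    · exact h

  -- Pythagorean triple: z^2 + (xy)^2 = (x^2+y^2)^2
  have ht : PythagoreanTriple (z:ℤ) (x*y) (x^2+y^2) := by
    show (z:ℤ)*(z:ℤ) + (x*y)*(x*y) = (x^2+y^2)*(x^2+y^2)
    linear_combination -heq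
  have hxypos : 0 < x*y := mul_pos hx hy
  have hcop : Int.gcd (z:ℤ) (x*y) = 1 := by
    by_contra hne
    have hg0 : Int.gcd (z:ℤ) (x*y) ≠ 0 := by
      intro h0
      rw [Int.gcd_eq_zero_iff] at h0
      exact absurd h0.2 hxypos.ne'
    obtain ⟨p, hp, hpd⟩ := Nat.exists_prime_and_dvd hne
    have hpz : (p:ℤ) ∣ (z:ℤ) := dvd_trans (Int.natCast_dvd_natCast.mpr hpd) (Int.gcd_dvd_left _ _)
    have hpxy : (p:ℤ) ∣ x*y := dvd_trans (Int.natCast_dvd_natCast.mpr hpd) (Int.gcd_dvd_right _ _)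
    have hpp : Prime (p:ℤ) := Nat.prime_iff_prime_int.mp hp
    have hone : ¬ ((p:ℤ) ∣ 1) := fun h => hpp.not_unit (isUnit_of_dvd_one h)
    rcases hpp.2.2 x y hpxy with hpx | hpy
    · have hpy : (p:ℤ) ∣ y := by
        apply hpp.dvd_of_dvd_pow (n := 4)
        have h4 : y^4 = (z:ℤ)^2 - x^4 - x^2*y^2 := by linear_combination heq
        rw [h4]
        exact dvd_sub (dvd_sub (dvd_pow hpz two_ne_zero) (dvd_pow hpx (by norm_num)))
          ((dvd_pow hpx two_ne_zero).mul_right _)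
      have := Int.dvd_gcd hpx hpy
      rw [hgcd] at this
      exact hone (by exact_mod_cast this)
    · have hpx : (p:ℤ) ∣ x := by
        apply hpp.dvd_of_dvd_pow (n := 4)
        have h4 : x^4 = (z:ℤ)^2 - y^4 - x^2*y^2 := by linear_combination heq
        rw [h4]
        exact dvd_sub (dvd_sub (dvd_pow hpz two_ne_zero) (dvd_pow hpy (by norm_num)))
          ((dvd_pow hpy two_ne_zero).mul_left _)
      have := Int.dvd_gcd hpx hpy
      rw [hgcd] at this
      exact hone (by exact_mod_cast this)
  obtain ⟨m, n, hmn1, hmn2, hmncop, -⟩ := PythagoreanTriple.coprime_classification.mp ⟨ht, hcop⟩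
  rcases hmn1 with ⟨hz1, hxy2⟩ | ⟨hz1, hxy2⟩
  swap
  · -- z = 2mn contradicts Odd z
    obtain ⟨k, hk⟩ := hzo
    rw [hz1] at hk
    obtain ⟨K, hK⟩ : ∃ K : ℤ, m*n = K := ⟨_, rfl⟩
    have : 2*K = 2*k+1 := by linear_combination hk - 2*hK
    omega
  have hsum : x^2 + y^2 = m^2 + n^2 := by
    rcases hmn2 with h | h
    · exact h
    · exfalso
      have h1 : (0:ℤ) < x^2 := pow_pos hx 2
      have h2 : (0:ℤ) < y^2 := pow_pos hy 2
      have h3 : (0:ℤ) ≤ m^2 := sq_nonneg m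
      have h4 : (0:ℤ) ≤ n^2 := sq_nonneg n
      linarith
  have hmnpos : 0 < m*n := by
    have h2 := hxypos
    rw [hxy2, mul_assoc] at h2
    linarith
  have hm0 : m ≠ 0 := by rintro rfl; simp at hmnpos
  have hn0 : n ≠ 0 := by rintro rfl; simp at hmnpos

  -- move to naturals
  obtain ⟨X, hX⟩ : ∃ X : ℕ, x = (X:ℤ) := ⟨x.toNat, (Int.toNat_of_nonneg hx.le).symm⟩
  obtain ⟨Y, hY⟩ : ∃ Y : ℕ, y = (Y:ℤ) := ⟨y.toNat, (Int.toNat_of_nonneg hy.le).symm⟩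
  set M := m.natAbs with hMdef
  set N := n.natAbs with hNdef
  have hm2 : ((M:ℤ))^2 = m^2 := Int.natAbs_sq m
  have hn2 : ((N:ℤ))^2 = n^2 := Int.natAbs_sq n
  have hmn' : ((M:ℤ))*((N:ℤ)) = m*n := by
    have h1 : ((M:ℤ))*((N:ℤ)) = |m * n| := by
      rw [abs_mul, Int.abs_eq_natAbs m, Int.abs_eq_natAbs n]
    rw [abs_of_pos hmnpos] at h1
    exact h1
  -- Y is even
  have hYe : Even Y := by rwa [hY, Int.even_coe_nat] at hye
  obtain ⟨Y1', hY1'⟩ := hYe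
  obtain ⟨Y1, hY1⟩ : ∃ Y1, Y = 2*Y1 := ⟨Y1', by omega⟩
  have hX0 : X ≠ 0 := by rintro rfl; rw [hX] at hx; simp at hx
  have hY0 : Y ≠ 0 := by rintro rfl; rw [hY] at hy; simp at hy
  have hY10 : Y1 ≠ 0 := by omega
  have hM0 : M ≠ 0 := fun h => hm0 (Int.natAbs_eq_zero.mp h)
  have hN0 : N ≠ 0 := fun h => hn0 (Int.natAbs_eq_zero.mp h)
  -- X * Y1 = M * N
  have hyy : (Y:ℤ) = 2*(Y1:ℤ) := by exact_mod_cast congrArg (Nat.cast : ℕ → ℤ) hY1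
  have hXY1 : X * Y1 = M * N := by
    rw [hX, hY, hyy] at hxy2
    have h2 : (2:ℤ) * ((X:ℤ)*(Y1:ℤ)) = 2 * ((M:ℤ)*(N:ℤ)) := by
      rw [hmn']; linear_combination hxy2
    have := mul_left_cancel₀ (two_ne_zero (α := ℤ)) h2
    exact_mod_cast this
  -- coprimality facts in ℕ
  have hXYcop : Nat.Coprime X Y := by
    rw [hX, hY] at hgcd
    rwa [Int.gcd_natCast_natCast] at hgcd
  have hXY1cop : Nat.Coprime X Y1 := hXYcop.coprime_dvd_right ⟨2, by omega⟩
  have hMNcop : Nat.Coprime M N := hmncop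
  -- split
  obtain ⟨a, b, c, d, hXab, hMac, hY1cd, hNbd, hbc⟩ := nat_split hX0 hM0 hXY1
  have ha0 : a ≠ 0 := fun h => hX0 (by rw [hXab, h, zero_mul])
  have hb0 : b ≠ 0 := fun h => hX0 (by rw [hXab, h, mul_zero])
  have hc0 : c ≠ 0 := fun h => hM0 (by rw [hMac, h, mul_zero])
  have hd0 : d ≠ 0 := fun h => hN0 (by rw [hNbd, h, mul_zero])
  have hab : Nat.Coprime a b :=
    (hMNcop.coprime_dvd_left (hMac ▸ dvd_mul_right a c)).coprime_dvd_right (hNbd ▸ dvd_mul_right b d)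
  have hac : Nat.Coprime a c :=
    (hXY1cop.coprime_dvd_left (hXab ▸ dvd_mul_right a b)).coprime_dvd_right (hY1cd ▸ dvd_mul_right c d)
  have had : Nat.Coprime a d :=
    (hXY1cop.coprime_dvd_left (hXab ▸ dvd_mul_right a b)).coprime_dvd_right (hY1cd ▸ dvd_mul_left d c)
  have hbd : Nat.Coprime b d :=
    (hXY1cop.coprime_dvd_left (hXab ▸ dvd_mul_left b a)).coprime_dvd_right (hY1cd ▸ dvd_mul_left d c)
  -- parities
  have hXodd : Odd X := by rwa [hX, Int.odd_coe_nat] at hxo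
  have haoddn : Odd a := (Nat.odd_mul.mp (hXab ▸ hXodd)).1
  have hboddn : Odd b := (Nat.odd_mul.mp (hXab ▸ hXodd)).2
  have haodd : Odd (a:ℤ) := by rwa [Int.odd_coe_nat]
  have hbodd : Odd (b:ℤ) := by rwa [Int.odd_coe_nat]
  -- key equation
  have hkey : (a:ℤ)^2*((b:ℤ)^2-(c:ℤ)^2) = (d:ℤ)^2*((b:ℤ)^2-4*(c:ℤ)^2) := by
    have hXc : (X:ℤ) = (a:ℤ)*(b:ℤ) := by exact_mod_cast congrArg (Nat.cast : ℕ → ℤ) hXab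
    have hMc : (M:ℤ) = (a:ℤ)*(c:ℤ) := by exact_mod_cast congrArg (Nat.cast : ℕ → ℤ) hMac
    have hY1c : (Y1:ℤ) = (c:ℤ)*(d:ℤ) := by exact_mod_cast congrArg (Nat.cast : ℕ → ℤ) hY1cd
    have hNc : (N:ℤ) = (b:ℤ)*(d:ℤ) := by exact_mod_cast congrArg (Nat.cast : ℕ → ℤ) hNbd
    rw [hX, hY, hyy] at hsum
    -- hsum : (X:ℤ)^2 + (2*Y1)^2 = m^2 + n^2
    rw [← hm2, ← hn2] at hsum
    rw [hXc, hMc, hNc, hY1c] at hsum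
    linear_combination hsum
  -- the divisor t
  have hdZ0 : ((d:ℤ))^2 ≠ 0 := pow_ne_zero _ (Int.natCast_ne_zero.mpr hd0)
  have hdvd : ((d:ℤ))^2 ∣ (b:ℤ)^2 - (c:ℤ)^2 := by
    have hco : IsCoprime ((d:ℤ)^2) ((a:ℤ)^2) := (Nat.isCoprime_iff_coprime.mpr had.symm).pow
    exact hco.dvd_of_dvd_mul_left ⟨(b:ℤ)^2-4*(c:ℤ)^2, by linear_combination hkey⟩
  obtain ⟨t, htt⟩ := hdvd
  have hat : (b:ℤ)^2 - 4*(c:ℤ)^2 = (a:ℤ)^2*t := by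
    have h5 : (d:ℤ)^2 * ((a:ℤ)^2*t) = (d:ℤ)^2*((b:ℤ)^2-4*(c:ℤ)^2) := by
      linear_combination hkey - (a:ℤ)^2 * htt
    exact (mul_left_cancel₀ hdZ0 h5).symm
  have h3c : 3*(c:ℤ)^2 = ((d:ℤ)^2-(a:ℤ)^2) * t := by linear_combination htt - hat
  have h3b : 3*(b:ℤ)^2 = (4*(d:ℤ)^2-(a:ℤ)^2) * t := by linear_combination 4*htt - hat
  have ht3 : t ∣ 3 := by
    obtain ⟨u, v, huv⟩ := ((Nat.isCoprime_iff_coprime.mpr hbc).pow (m := 2) (n := 2))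
    exact ⟨u*(4*(d:ℤ)^2-(a:ℤ)^2) + v*((d:ℤ)^2-(a:ℤ)^2), by linear_combination u*h3b + v*h3c - 3*huv⟩
  have ht4 : t = 1 ∨ t = -1 ∨ t = 3 ∨ t = -3 := by
    have h1 : t.natAbs ∣ 3 := by
      have := Int.natAbs_dvd_natAbs.mpr ht3
      simpa using this
    have h2 := (Nat.prime_three).eq_one_or_self_of_dvd _ h1
    omega
  -- size bound: Y1 < z
  have hY1z : Y1 < z := by
    have hz0 : (0:ℤ) ≤ (z:ℤ) := Int.natCast_nonneg z
    have hY1pos : (1:ℤ) ≤ (Y1:ℤ) := by exact_mod_cast Nat.pos_of_ne_zero hY10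
    have hyv : y = 2*(Y1:ℤ) := by rw [hY, hyy]
    have e1 : y^4 < (z:ℤ)^2 := by
      linarith [heq, pow_pos hx 4, mul_pos (pow_pos hx 2) (pow_pos hy 2)]
    have e2 : y^4 = 16*(Y1:ℤ)^4 := by rw [hyv]; ring
    have hs : (1:ℤ) ≤ (Y1:ℤ)^2 := by
      have := pow_le_pow_left₀ (by norm_num : (0:ℤ) ≤ 1) hY1pos 2
      simpa using this
    have h4 : (Y1:ℤ)^2*1 ≤ (Y1:ℤ)^2*(Y1:ℤ)^2 := mul_le_mul_of_nonneg_left hs (sq_nonneg _)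
    have h5 : (0:ℤ) < (Y1:ℤ)^4 := by positivity
    have e3 : (Y1:ℤ)^2 < 16*(Y1:ℤ)^4 := by
      have h6 : (Y1:ℤ)^2*(Y1:ℤ)^2 = (Y1:ℤ)^4 := by ring
      linarith
    by_contra hcon
    push_neg at hcon
    have hle : (z:ℤ) ≤ (Y1:ℤ) := by exact_mod_cast hcon
    have : (z:ℤ)^2 ≤ (Y1:ℤ)^2 := pow_le_pow_left₀ hz0 hle 2
    linarith
  have hY1posn : 0 < Y1 := Nat.pos_of_ne_zero hY10
  -- case analysis on t
  rcases ht4 with rfl | rfl | rfl | rfl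
  · -- t = 1 : b² = c² + d², b² = a² + 4c²
    have hb2 : (b:ℤ)^2 = (c:ℤ)^2 + (d:ℤ)^2 := by linear_combination htt
    have htr2 : PythagoreanTriple (a:ℤ) (2*(c:ℤ)) (b:ℤ) := by
      show (a:ℤ)*(a:ℤ) + (2*(c:ℤ))*(2*(c:ℤ)) = (b:ℤ)*(b:ℤ)
      linear_combination -hat
    have hcop2 : Int.gcd (a:ℤ) (2*(c:ℤ)) = 1 := by
      have hn : Nat.Coprime a (2*c) := Nat.Coprime.mul_right haoddn.coprime_two_right hac
      have : (2*(c:ℤ)) = ((2*c : ℕ) : ℤ) := by push_cast; ring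
      rw [this, Int.gcd_natCast_natCast]
      exact hn
    obtain ⟨e, f, hef1, hef2, -, -⟩ := PythagoreanTriple.coprime_classification.mp ⟨htr2, hcop2⟩
    rcases hef1 with ⟨hae, hce⟩ | ⟨hae, hce⟩
    swap
    · -- a = 2ef contradicts a odd
      obtain ⟨k, hk⟩ := haodd
      rw [hae] at hk
      obtain ⟨K, hK⟩ : ∃ K : ℤ, e*f = K := ⟨_, rfl⟩
      have : 2*K = 2*k+1 := by linear_combination hk - 2*hK
      omega
    · have hcef : (c:ℤ) = e*f := by linarith
      have hbsq : (b:ℤ)^2 = (e^2+f^2)^2 := by rcases hef2 with h | h <;> rw [h] <;> ring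
      have key : e^4 + e^2*f^2 + f^4 = ((d:ℕ):ℤ)^2 := by
        linear_combination hb2 - hbsq + ((c:ℤ)+e*f)*hcef
      have hdY1 : d ≤ Y1 := Nat.le_of_dvd hY1posn (hY1cd ▸ dvd_mul_left d c)
      have := IH d (lt_of_le_of_lt hdY1 hY1z) e f key
      -- e*f = 0 → c = 0, contradiction
      rw [← hcef] at this
      exact hc0 (by exact_mod_cast this)
  · -- t = -1 : a² + b² = 4c², parity contradiction
    have h4 : (a:ℤ)^2 + (b:ℤ)^2 = 4*((c:ℤ)^2) := by linear_combination hat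
    exact odd_sq_parity haodd hbodd h4
  · -- t = 3 : a² + b² = 4d², parity contradiction
    have h5 : (3:ℤ)*((a:ℤ)^2+(b:ℤ)^2) = 3*(4*((d:ℤ)^2)) := by linear_combination h3b
    have h4 : (a:ℤ)^2 + (b:ℤ)^2 = 4*((d:ℤ)^2) := mul_left_cancel₀ (by norm_num) h5
    exact odd_sq_parity haodd hbodd h4
  · -- t = -3 : a² = c² + d², a² = b² + 4d²
    have h5 : (3:ℤ)*((c:ℤ)^2) = 3*((a:ℤ)^2 - (d:ℤ)^2) := by linear_combination h3c
    have hc2 : (c:ℤ)^2 = (a:ℤ)^2 - (d:ℤ)^2 := mul_left_cancel₀ (by norm_num : (3:ℤ) ≠ 0) h5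
    have hb2 : (b:ℤ)^2 = (a:ℤ)^2 - 4*(d:ℤ)^2 := by linear_combination hat + 4*hc2
    have htr2 : PythagoreanTriple (b:ℤ) (2*(d:ℤ)) (a:ℤ) := by
      show (b:ℤ)*(b:ℤ) + (2*(d:ℤ))*(2*(d:ℤ)) = (a:ℤ)*(a:ℤ)
      linear_combination hb2
    have hcop2 : Int.gcd (b:ℤ) (2*(d:ℤ)) = 1 := by
      have hn : Nat.Coprime b (2*d) := Nat.Coprime.mul_right hboddn.coprime_two_right hbd
      have : (2*(d:ℤ)) = ((2*d : ℕ) : ℤ) := by push_cast; ring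
      rw [this, Int.gcd_natCast_natCast]
      exact hn
    obtain ⟨e, f, hef1, hef2, -, -⟩ := PythagoreanTriple.coprime_classification.mp ⟨htr2, hcop2⟩
    rcases hef1 with ⟨hbe, hde⟩ | ⟨hbe, hde⟩
    swap
    · obtain ⟨k, hk⟩ := hbodd
      rw [hbe] at hk
      obtain ⟨K, hK⟩ : ∃ K : ℤ, e*f = K := ⟨_, rfl⟩
      have : 2*K = 2*k+1 := by linear_combination hk - 2*hK
      omega
    · have hdef : (d:ℤ) = e*f := by linarith
      have hasq : (a:ℤ)^2 = (e^2+f^2)^2 := by rcases hef2 with h | h <;> rw [h] <;> ring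
      have key : e^4 + e^2*f^2 + f^4 = ((c:ℕ):ℤ)^2 := by
        linear_combination -hc2 - hasq + ((d:ℤ)+e*f)*hdef
      have hcY1 : c ≤ Y1 := Nat.le_of_dvd hY1posn (hY1cd ▸ dvd_mul_right c d)
      have := IH c (lt_of_le_of_lt hcY1 hY1z) e f key
      rw [← hdef] at this
      exact hd0 (by exact_mod_cast this)





lemma zmod4_odd : ∀ k : ZMod 4, 2*k+1 = 1 ∨ 2*k+1 = 3 := by decide

lemma zmod4_no (u v w : ZMod 4) (hu : u = 1 ∨ u = 3) (hv : v = 1 ∨ v = 3) :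
    u^4 + u^2*v^2 + v^4 ≠ w^2 := by
  rcases hu with rfl | rfl <;> rcases hv with rfl | rfl <;> revert w <;> decide


lemma fermat_main : ∀ z : ℕ, ∀ x y : ℤ, x^4 + x^2*y^2 + y^4 = (z:ℤ)^2 → x * y = 0 := by
  intro z
  induction z using Nat.strong_induction_on with
  | _ z IH =>
  intro x y heq
  by_contra hxy
  have hx0 : x ≠ 0 := fun h => hxy (by rw [h, zero_mul])
  have hy0 : y ≠ 0 := fun h => hxy (by rw [h, mul_zero])
  have habs4 : ∀ w : ℤ, ((w.natAbs:ℤ))^4 = w^4 := by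
    intro w
    have h2 : ((w.natAbs:ℤ))^2 = w^2 := Int.natAbs_sq w
    calc ((w.natAbs:ℤ))^4 = (((w.natAbs:ℤ))^2)^2 := by ring
    _ = (w^2)^2 := by rw [h2]
    _ = w^4 := by ring
  have hz0 : z ≠ 0 := by
    rintro rfl
    have h1 : x^4 + x^2*y^2 + y^4 = 0 := by simpa using heq
    have h2 : (0:ℤ) < x^4 := by
      have h := pow_pos (abs_pos.mpr hx0) 4
      rwa [Even.pow_abs (by decide : Even 4)] at h
    have h3 : (0:ℤ) ≤ x^2*y^2 := by positivity
    have h4 : (0:ℤ) ≤ y^4 := by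
      have := sq_nonneg (y^2)
      calc (0:ℤ) ≤ (y^2)^2 := this
      _ = y^4 := by ring
    linarith
  set g := Int.gcd x y with hg
  have hgpos : g ≠ 0 := by
    intro h
    rw [hg] at h
    exact hx0 (Int.gcd_eq_zero_iff.mp h).1
  by_cases hg1 : g = 1
  · -- coprime case
    rw [hg] at hg1
    -- parity discussion
    rcases Int.even_or_odd x with hxe | hxo
    · rcases Int.even_or_odd y with hye | hyo
      · -- both even impossible
        have h2 : (2:ℤ) ∣ x := hxe.two_dvd
        have h2' : (2:ℤ) ∣ y := hye.two_dvd
        have hd := Int.dvd_gcd h2 h2'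
        rw [hg1] at hd
        norm_num at hd
      · -- x even, y odd
        have heq2 : y^4 + y^2*x^2 + x^4 = (z:ℤ)^2 := by linear_combination heq
        set X := ((x.natAbs : ℕ) : ℤ) with hXd
        set Y := ((y.natAbs : ℕ) : ℤ) with hYd
        have hX2 : X^2 = x^2 := Int.natAbs_sq x
        have hY2 : Y^2 = y^2 := Int.natAbs_sq y
        have heq3 : Y^4 + Y^2*X^2 + X^4 = (z:ℤ)^2 := by
          rw [← habs4 x, ← habs4 y, ← hX2, ← hY2] at heq2
          exact heq2
        have hgcd3 : Int.gcd Y X = 1 := by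
          rw [Int.gcd_natCast_natCast]
          rw [Int.gcd_comm] at hg1
          exact hg1
        have hXpos : 0 < X := by
          rw [hXd]
          exact_mod_cast Nat.pos_of_ne_zero (Int.natAbs_ne_zero.mpr hx0)
        have hYpos : 0 < Y := by
          rw [hYd]
          exact_mod_cast Nat.pos_of_ne_zero (Int.natAbs_ne_zero.mpr hy0)
        have hYodd : Odd Y := by
          rw [hYd, Int.odd_coe_nat, Int.natAbs_odd]
          exact hyo
        have hXeven : Even X := by
          rw [hXd, Int.even_coe_nat, Int.natAbs_even]
          exact hxe
        exact absurd (fermat_aux z (fun z' h => IH z' h) Y X hYpos hXpos hgcd3 hYodd hXeven heq3)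
          not_false
    · rcases Int.even_or_odd y with hye | hyo
      · -- x odd, y even
        set X := ((x.natAbs : ℕ) : ℤ) with hXd
        set Y := ((y.natAbs : ℕ) : ℤ) with hYd
        have hX2 : X^2 = x^2 := Int.natAbs_sq x
        have hY2 : Y^2 = y^2 := Int.natAbs_sq y
        have heq3 : X^4 + X^2*Y^2 + Y^4 = (z:ℤ)^2 := by
          rw [← habs4 x, ← habs4 y, ← hX2, ← hY2] at heq
          exact heq
        have hgcd3 : Int.gcd X Y = 1 := by
          rw [Int.gcd_natCast_natCast]
          exact hg1
        have hXpos : 0 < X := by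
          rw [hXd]
          exact_mod_cast Nat.pos_of_ne_zero (Int.natAbs_ne_zero.mpr hx0)
        have hYpos : 0 < Y := by
          rw [hYd]
          exact_mod_cast Nat.pos_of_ne_zero (Int.natAbs_ne_zero.mpr hy0)
        have hXodd : Odd X := by
          rw [hXd, Int.odd_coe_nat, Int.natAbs_odd]
          exact hxo
        have hYeven : Even Y := by
          rw [hYd, Int.even_coe_nat, Int.natAbs_even]
          exact hye
        exact absurd (fermat_aux z (fun z' h => IH z' h) X Y hXpos hYpos hgcd3 hXodd hYeven heq3)
          not_false
      · -- both odd : mod 4 contradiction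
        obtain ⟨k, hk⟩ := hxo
        obtain ⟨l, hl⟩ := hyo
        have hu : ((x : ZMod 4)) = 1 ∨ ((x : ZMod 4)) = 3 := by
          have := congrArg (Int.cast : ℤ → ZMod 4) hk
          push_cast at this
          rw [this]
          exact zmod4_odd _
        have hv : ((y : ZMod 4)) = 1 ∨ ((y : ZMod 4)) = 3 := by
          have := congrArg (Int.cast : ℤ → ZMod 4) hl
          push_cast at this
          rw [this]
          exact zmod4_odd _
        have hw := congrArg (Int.cast : ℤ → ZMod 4) heq
        push_cast at hw
        exact zmod4_no _ _ _ hu hv hw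
  · -- g > 1 : descend
    obtain ⟨x', hx'⟩ : ((g:ℕ):ℤ) ∣ x := hg ▸ Int.gcd_dvd_left x y
    obtain ⟨y', hy'⟩ : ((g:ℕ):ℤ) ∣ y := hg ▸ Int.gcd_dvd_right x y
    have hzdvd : ((g:ℤ))^4 ∣ ((z:ℕ):ℤ)^2 :=
      ⟨x'^4 + x'^2*y'^2 + y'^4, by rw [← heq, hx', hy']; ring⟩
    have hnat : g^4 ∣ z^2 := by exact_mod_cast hzdvd
    have hnat2 : (g^2)^2 ∣ z^2 := by rwa [← pow_mul]
    have hgz : g^2 ∣ z := (Nat.pow_dvd_pow_iff two_ne_zero).mp hnat2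
    obtain ⟨z', hz'⟩ := hgz
    have hgZ : ((g:ℤ)) ≠ 0 := Int.natCast_ne_zero.mpr hgpos
    have hzc : ((z:ℕ):ℤ) = (g:ℤ)^2*((z':ℕ):ℤ) := by exact_mod_cast congrArg (Nat.cast : ℕ → ℤ) hz'
    have heq' : x'^4 + x'^2*y'^2 + y'^4 = ((z':ℕ):ℤ)^2 := by
      have h5 : ((g:ℤ))^4 * (x'^4 + x'^2*y'^2 + y'^4) = ((g:ℤ))^4 * ((z':ℕ):ℤ)^2 := by
        rw [hx', hy', hzc] at heq
        linear_combination heq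
      exact mul_left_cancel₀ (pow_ne_zero 4 hgZ) h5
    have hzlt : z' < z := by
      have hgge : 2 ≤ g := by omega
      have hz'0 : z' ≠ 0 := by
        rintro rfl
        rw [Nat.mul_zero] at hz'
        exact hz0 hz'
      have hg2 : 4 ≤ g^2 := by
        calc 4 = 2*2 := by norm_num
        _ ≤ g*g := Nat.mul_le_mul hgge hgge
        _ = g^2 := by ring
      have h7 : z' * 4 ≤ z' * g^2 := Nat.mul_le_mul_left z' hg2
      have h8 : z = z' * g^2 := by rw [hz']; ring
      omega
    have := IH z' hzlt x' y' heq'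
    rcases mul_eq_zero.mp this with h | h
    · exact hx0 (by rw [hx', h, mul_zero])
    · exact hy0 (by rw [hy', h, mul_zero])


lemma rat_points (x y : ℚ) (h : y^2 = x^3 + x^2 + x) : x = 0 ∧ y = 0 := by
  have hx0 : x = 0 → x = 0 ∧ y = 0 := by
    rintro rfl
    refine ⟨rfl, ?_⟩
    have : y^2 = 0 := by simpa using h
    exact pow_eq_zero_iff two_ne_zero |>.mp this
  by_cases hp0 : x.num = 0
  · exact hx0 (Rat.num_eq_zero.mp hp0)
  exfalso
  set p := x.num with hpd
  set q := (x.den:ℤ) with hqd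
  have hq0 : (0:ℤ) < q := by rw [hqd]; exact_mod_cast x.pos
  have hden0 : ((x.den:ℚ)) ≠ 0 := by exact_mod_cast x.den_ne_zero
  have hcop : IsCoprime p q := by
    rw [Int.isCoprime_iff_gcd_eq_one]
    exact x.reduced
  -- the integer w = y * den^2
  have h' := h
  rw [← Rat.num_div_den x] at h'
  have hw2 : (y*(x.den:ℚ)^2)^2 = ((p * q * (p^2 + p*q + q^2) : ℤ) : ℚ) := by
    field_simp at h'
    have hw2' : (y*(x.den:ℚ)^2)^2 * (x.den:ℚ)^2 = ((p * q * (p^2 + p*q + q^2) : ℤ) : ℚ) * (x.den:ℚ)^2 := by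
      push_cast
      linear_combination (x.den:ℚ)^3 * h'
    exact mul_right_cancel₀ (pow_ne_zero 2 hden0) hw2'
  obtain ⟨w, hw⟩ : ∃ w : ℤ, y*(x.den:ℚ)^2 = (w:ℚ) := by
    set r := y*(x.den:ℚ)^2 with hrd
    have hden1 : (r*r).den = 1 := by
      have : r*r = ((p * q * (p^2 + p*q + q^2) : ℤ) : ℚ) := by rw [← hw2]; ring
      rw [this, Rat.den_intCast]
    rw [Rat.mul_self_den] at hden1
    have hr1 : r.den = 1 := by
      have h9 := Nat.eq_one_of_mul_eq_one_left hden1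
      exact h9
    exact ⟨r.num, ((Rat.den_eq_one_iff r).mp hr1).symm⟩
  have hweq : (p*q) * (p^2 + p*q + q^2) = w^2 := by
    have : ((w:ℚ))^2 = ((p * q * (p^2 + p*q + q^2) : ℤ) : ℚ) := by rw [← hw]; exact hw2
    have h2 : ((w^2 : ℤ):ℚ) = ((p * q * (p^2 + p*q + q^2) : ℤ) : ℚ) := by push_cast; exact_mod_cast this
    have h3 : w^2 = p * q * (p^2 + p*q + q^2) := by exact_mod_cast h2
    linear_combination -h3
  -- positivity of S := p^2+pq+q^2
  have hS : (0:ℤ) < p^2 + p*q + q^2 := by nlinarith [sq_nonneg (2*p+q), sq_nonneg q, hq0]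
  have hS0 : p^2 + p*q + q^2 ≠ 0 := hS.ne'
  -- p*q > 0
  have hw0 : w ≠ 0 := by
    rintro rfl
    have : (p*q) * (p^2+p*q+q^2) = 0 := by rw [hweq]; ring
    rcases mul_eq_zero.mp this with h1 | h1
    · rcases mul_eq_zero.mp h1 with h2 | h2
      · exact hp0 h2
      · exact hq0.ne' h2
    · exact hS0 h1
  have hpqpos : 0 < p*q := by
    rcases lt_trichotomy (p*q) 0 with hlt | heq0 | hgt
    · exfalso
      have h1 : (p*q) * (p^2+p*q+q^2) < 0 := mul_neg_of_neg_of_pos hlt hS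
      have h2 : (0:ℤ) < w^2 := by positivity
      rw [hweq] at h1
      linarith
    · exfalso
      rcases mul_eq_zero.mp heq0 with h2 | h2
      · exact hp0 h2
      · exact hq0.ne' h2
    · exact hgt
  have hppos : 0 < p := by
    rcases lt_trichotomy p 0 with hlt | heq0 | hgt
    · exfalso
      have := mul_neg_of_neg_of_pos hlt hq0
      linarith
    · exact absurd heq0 hp0
    · exact hgt
  -- coprimality of p*q and S
  have hpS : IsCoprime p (p^2 + p*q + q^2) := by
    have h1 : IsCoprime p (q^2) := hcop.pow_right
    have h2 := h1.add_mul_left_right (p + q)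
    have h3 : q^2 + p*(p+q) = p^2 + p*q + q^2 := by ring
    rwa [h3] at h2
  have hqS : IsCoprime q (p^2 + p*q + q^2) := by
    have h1 : IsCoprime q (p^2) := hcop.symm.pow_right
    have h2 := h1.add_mul_left_right (p + q)
    have h3 : p^2 + q*(p+q) = p^2 + p*q + q^2 := by ring
    rwa [h3] at h2
  have hcop2 : IsCoprime (p*q) (p^2 + p*q + q^2) := hpS.mul_left hqS
  -- p*q is a square
  obtain ⟨s, hs⟩ := Int.sq_of_isCoprime hcop2 hweq
  have hs' : p*q = s^2 := by
    rcases hs with h1 | h1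
    · exact h1
    · exfalso
      have : (0:ℤ) ≤ s^2 := sq_nonneg s
      linarith [hpqpos, h1]
  -- S is a square
  obtain ⟨r, hr⟩ := Int.sq_of_isCoprime hcop2.symm (by linear_combination hweq : (p^2+p*q+q^2)*(p*q) = w^2)
  have hr' : p^2 + p*q + q^2 = r^2 := by
    rcases hr with h1 | h1
    · exact h1
    · exfalso
      have : (0:ℤ) ≤ r^2 := sq_nonneg r
      linarith [hS, h1]
  -- p and q are squares
  obtain ⟨a, ha⟩ := Int.sq_of_isCoprime hcop hs'
  have ha' : p = a^2 := by
    rcases ha with h1 | h1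
    · exact h1
    · exfalso
      have : (0:ℤ) ≤ a^2 := sq_nonneg a
      linarith [hppos, h1]
  obtain ⟨b, hb⟩ := Int.sq_of_isCoprime hcop.symm (by linear_combination hs' : q*p = s^2)
  have hb' : q = b^2 := by
    rcases hb with h1 | h1
    · exact h1
    · exfalso
      have : (0:ℤ) ≤ b^2 := sq_nonneg b
      linarith [hq0, h1]
  -- apply the quartic Fermat result
  have hkey : a^4 + a^2*b^2 + b^4 = ((r.natAbs:ℕ):ℤ)^2 := by
    have h9 : ((r.natAbs:ℤ))^2 = r^2 := Int.natAbs_sq r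
    rw [h9, ← hr', ha', hb']
    ring
  have := fermat_main r.natAbs a b hkey
  rcases mul_eq_zero.mp this with h1 | h1
  · exact hp0 (by rw [ha', h1]; ring)
  · exact hq0.ne' (by rw [hb', h1]; ring)

/-- The elliptic curve `E₁⁻¹ : y² = x³ + x² + x` over `ℚ`,
the quadratic twist by `-1` of `y² = x³ - x² + x`. -/
def E₁inv : WeierstrassCurve ℚ := ⟨0, 1, 0, 1, 0⟩

theorem E1inv_rational_points :
    (∀ P : E₁inv.toAffine.Point,
      P = 0 ∨
      (∃ h : E₁inv.toAffine.Nonsingular 0 0, P = WeierstrassCurve.Affine.Point.some 0 0 h)) ∧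
    Nonempty (E₁inv.toAffine.Point ≃+ ZMod 2) := by
  classical
  have ha : E₁inv.a₁ = 0 ∧ E₁inv.a₂ = 1 ∧ E₁inv.a₃ = 0 ∧ E₁inv.a₄ = 1 ∧ E₁inv.a₆ = 0 :=
    ⟨rfl, rfl, rfl, rfl, rfl⟩
  have h00 : E₁inv.toAffine.Nonsingular 0 0 := by
    rw [WeierstrassCurve.Affine.nonsingular_iff, WeierstrassCurve.Affine.equation_iff]
    norm_num [ha.1, ha.2.1, ha.2.2.1, ha.2.2.2.1, ha.2.2.2.2]
  set P₀ : E₁inv.toAffine.Point := WeierstrassCurve.Affine.Point.some 0 0 h00 with hP₀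
  have hcl : ∀ P : E₁inv.toAffine.Point, P = 0 ∨ P = P₀ := by
    intro P
    cases P with
    | zero => exact Or.inl rfl
    | @some x y h =>
      right
      have heq := h.1
      rw [WeierstrassCurve.Affine.equation_iff] at heq
      rw [ha.1, ha.2.1, ha.2.2.1, ha.2.2.2.1, ha.2.2.2.2] at heq
      have heq' : y^2 = x^3 + x^2 + x := by linarith [heq]
      obtain ⟨hx, hy⟩ := rat_points x y heq'
      subst hx
      subst hy
      rfl
  have hne : P₀ ≠ 0 := by
    intro hcon
    rw [WeierstrassCurve.Affine.Point.zero_def] at hcon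
    rw [hP₀] at hcon
    cases hcon
  have htor : P₀ + P₀ = 0 := by
    apply WeierstrassCurve.Affine.Point.add_self_of_Y_eq
    simp [WeierstrassCurve.Affine.negY, ha.1, ha.2.2.1]
  have hz2 : ∀ n : ZMod 2, n = 0 ∨ n = 1 := by decide
  refine ⟨fun P => (hcl P).imp id (fun h => ⟨h00, h⟩), ⟨⟨⟨fun P => if P = 0 then 0 else 1,
    fun n => if n = 0 then 0 else P₀, ?_, ?_⟩, ?_⟩⟩⟩
  · intro P
    rcases hcl P with rfl | rfl
    · simp
    · simp [hne]
  · intro n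
    rcases hz2 n with rfl | rfl
    · simp
    · simp [hne]
  · intro P Q
    rcases hcl P with rfl | rfl <;> rcases hcl Q with rfl | rfl <;>
      simp [hne, htor] <;> decide
end
end
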